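/- arXiv:2501.15883 — 8 statements merged into one kernel-verified Lean document; each statement's English description precedes it below -/
import Mathlib

section
/- For the complete graph K_n with n > 2, the mincut graph X(K_n) is isomorphic to K_n. -/
open SimpleGraph

/-- `X` is an edge-cut of the connected graph `G`: a set of edges of `G` whose
deletion disconnects `G`. -/
def IsEdgeCut {V : Type*} (G : SimpleGraph V) (X : Finset (Sym2 V)) : Prop :=
  G.Connected ∧ ↑X ⊆ G.edgeSet ∧ ¬(G.deleteEdges ↑X).Connected

/-- The edge-connectivity `λ(G)`: the minimum cardinality of an edge-cut. -/
noncomputable def edgeConn {V : Type*} (G : SimpleGraph V) : ℕ :=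
  sInf {n | ∃ X : Finset (Sym2 V), X.card = n ∧ IsEdgeCut G X}

/-- A mincut is an edge-cut of minimum cardinality. -/
def IsMincut {V : Type*} (G : SimpleGraph V) (X : Finset (Sym2 V)) : Prop :=
  IsEdgeCut G X ∧ X.card = edgeConn G

/-- The mincut graph `X(G)`: the intersection graph of the mincuts of `G`. -/
def mincutGraph {V : Type*} [DecidableEq V] (G : SimpleGraph V) :
    SimpleGraph {X : Finset (Sym2 V) // IsMincut G X} :=
  SimpleGraph.fromRel (fun X Y => (X.1 ∩ Y.1).Nonempty)

/-- A mincut is trivial if it is the set of edges incident on a single vertex. -/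
def IsTrivialMincut {V : Type*} (G : SimpleGraph V) (X : Finset (Sym2 V)) : Prop :=
  IsMincut G X ∧ ∃ v : V, ↑X = G.incidenceSet v

/-- `MincutSides G X A` says `X` is a mincut of `G` whose two sides are `A` and `Aᶜ`,
i.e. `X = ⟨A, Ā⟩`. -/
def MincutSides {V : Type*} (G : SimpleGraph V) (X : Finset (Sym2 V)) (A : Set V) : Prop :=
  IsMincut G X ∧ A.Nonempty ∧ Aᶜ.Nonempty ∧
  (↑X = {e | e ∈ G.edgeSet ∧ ∃ a ∈ A, ∃ b ∈ Aᶜ, e = s(a, b)}) ∧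
  (G.induce A).Connected ∧ (G.induce Aᶜ).Connected

/-- Two mincuts with sides `A` and `B` cross (overlap). -/
def Crossing {V : Type*} (A B : Set V) : Prop :=
  (A ∩ B).Nonempty ∧ (Aᶜ ∩ B).Nonempty ∧ (A ∩ Bᶜ).Nonempty ∧ (Aᶜ ∩ Bᶜ).Nonempty

/-- The number of edges of `G` with one endpoint in `S` and the other in `T`. -/
noncomputable def betweenEdges {V : Type*} (G : SimpleGraph V) (S T : Set V) : ℕ :=
  {e | e ∈ G.edgeSet ∧ ∃ a ∈ S, ∃ b ∈ T, e = s(a, b)}.ncard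


section Aux

variable {n : ℕ}

noncomputable def starCut (v : Fin n) : Finset (Sym2 (Fin n)) :=
  (⊤ : SimpleGraph (Fin n)).incidenceFinset v

lemma mem_starCut {v : Fin n} {e : Sym2 (Fin n)} :
    e ∈ starCut v ↔ e ∈ (⊤ : SimpleGraph (Fin n)).incidenceSet v :=
  (⊤ : SimpleGraph (Fin n)).mem_incidenceFinset (v := v) e

lemma mk_mem_starCut {v a b : Fin n} :
    s(a, b) ∈ starCut v ↔ a ≠ b ∧ (v = a ∨ v = b) := by
  rw [mem_starCut, SimpleGraph.mk'_mem_incidenceSet_iff, top_adj]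

lemma starCut_card (v : Fin n) : (starCut v).card = n - 1 := by
  rw [starCut, SimpleGraph.card_incidenceFinset_eq_degree, complete_graph_degree,
    Fintype.card_fin]

lemma cut_cross {X : Finset (Sym2 (Fin n))} {v a b : Fin n}
    (ha : ((⊤ : SimpleGraph (Fin n)).deleteEdges ↑X).Reachable v a)
    (hb : ¬ ((⊤ : SimpleGraph (Fin n)).deleteEdges ↑X).Reachable v b) :
    s(a, b) ∈ X := by
  by_contra hmem
  have hne : a ≠ b := by rintro rfl; exact hb ha
  have hadj : ((⊤ : SimpleGraph (Fin n)).deleteEdges ↑X).Adj a b := by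
    simp [hne, hmem]
  exact hb (ha.trans hadj.reachable)

lemma edgeCut_lower {X : Finset (Sym2 (Fin n))}
    (hX : ¬ ((⊤ : SimpleGraph (Fin n)).deleteEdges ↑X).Connected) :
    n - 1 ≤ X.card := by
  classical
  set G' := (⊤ : SimpleGraph (Fin n)).deleteEdges ↑X with hG'
  by_cases hne : Nonempty (Fin n)
  swap
  · have : n = 0 := by
      by_contra h
      exact hne (Fin.pos_iff_nonempty.mp (Nat.pos_of_ne_zero h))
    simp [this]
  have hnc : ¬ G'.Preconnected := fun h => hX ((SimpleGraph.connected_iff _).mpr ⟨h, hne⟩)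
  rw [SimpleGraph.Preconnected] at hnc; push_neg at hnc
  obtain ⟨v, w, hvw⟩ := hnc
  set f : Fin n → Sym2 (Fin n) := fun u => if G'.Reachable v u then s(u, w) else s(v, u) with hf
  have hmem : ∀ u ∈ Finset.univ.erase v, f u ∈ X := by
    intro u _
    simp only [hf]
    split_ifs with h
    · exact cut_cross h hvw
    · exact cut_cross (SimpleGraph.Reachable.refl v) h
  have hinj : Set.InjOn f ↑(Finset.univ.erase v) := by
    intro u₁ h₁ u₂ h₂ heq
    have h₁v : u₁ ≠ v := by simpa using h₁
    have h₂v : u₂ ≠ v := by simpa using h₂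
    simp only [hf] at heq
    by_cases r₁ : G'.Reachable v u₁ <;> by_cases r₂ : G'.Reachable v u₂
    · rw [if_pos r₁, if_pos r₂, Sym2.eq_iff] at heq
      rcases heq with ⟨h, -⟩ | ⟨rfl, rfl⟩
      · exact h
      · exact absurd r₁ hvw
    · rw [if_pos r₁, if_neg r₂, Sym2.eq_iff] at heq
      rcases heq with ⟨rfl, rfl⟩ | ⟨rfl, rfl⟩
      · exact absurd rfl h₁v
      · exact absurd SimpleGraph.Reachable.rfl hvw
    · rw [if_neg r₁, if_pos r₂, Sym2.eq_iff] at heq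
      rcases heq with ⟨rfl, rfl⟩ | ⟨rfl, rfl⟩
      · exact absurd rfl h₂v
      · exact absurd SimpleGraph.Reachable.rfl hvw
    · rw [if_neg r₁, if_neg r₂, Sym2.eq_iff] at heq
      rcases heq with ⟨-, h⟩ | ⟨rfl, rfl⟩
      · exact h
      · exact absurd rfl h₂v
  have := Finset.card_le_card_of_injOn f hmem hinj
  rwa [Finset.card_erase_of_mem (Finset.mem_univ v), Finset.card_univ, Fintype.card_fin] at this


lemma starCut_isEdgeCut (hn : 2 < n) (v : Fin n) :
    IsEdgeCut (⊤ : SimpleGraph (Fin n)) (starCut v) := by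
  haveI : Nonempty (Fin n) := ⟨v⟩
  refine ⟨connected_top, ?_, ?_⟩
  · intro e he
    rw [Finset.mem_coe, mem_starCut] at he
    exact (⊤ : SimpleGraph (Fin n)).incidenceSet_subset v he
  · intro hc
    haveI : Nontrivial (Fin n) :=
      Fintype.one_lt_card_iff_nontrivial.mp (by simp; omega)
    obtain ⟨w, hw⟩ := exists_ne v
    have hiso : ∀ u, ¬ ((⊤ : SimpleGraph (Fin n)).deleteEdges ↑(starCut v)).Adj v u := by
      intro u hadj
      rw [SimpleGraph.deleteEdges_adj] at hadj
      exact hadj.2 (by rw [Finset.mem_coe, mk_mem_starCut]; exact ⟨hadj.1.ne, Or.inl rfl⟩)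
    obtain ⟨p⟩ := hc.preconnected v w
    cases p with
    | nil => exact hw rfl
    | cons h _ => exact hiso _ h

lemma edgeConn_top (hn : 2 < n) : edgeConn (⊤ : SimpleGraph (Fin n)) = n - 1 := by
  have v : Fin n := ⟨0, by omega⟩
  have hmem : n - 1 ∈ {m | ∃ X : Finset (Sym2 (Fin n)), X.card = m ∧ IsEdgeCut ⊤ X} :=
    ⟨starCut v, starCut_card v, starCut_isEdgeCut hn v⟩
  refine le_antisymm (Nat.sInf_le hmem) (le_csInf ⟨_, hmem⟩ ?_)
  rintro m ⟨X, rfl, -, -, hX⟩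
  exact edgeCut_lower hX

lemma starCut_isMincut (hn : 2 < n) (v : Fin n) :
    IsMincut (⊤ : SimpleGraph (Fin n)) (starCut v) :=
  ⟨starCut_isEdgeCut hn v, by rw [starCut_card, edgeConn_top hn]⟩

lemma mincut_eq_starCut (hn : 2 < n) {X : Finset (Sym2 (Fin n))}
    (hX : IsMincut (⊤ : SimpleGraph (Fin n)) X) : ∃ v, X = starCut v := by
  classical
  have hcard : X.card = n - 1 := by rw [hX.2, edgeConn_top hn]
  set G' := (⊤ : SimpleGraph (Fin n)).deleteEdges ↑X with hG'
  haveI : Nonempty (Fin n) := ⟨⟨0, by omega⟩⟩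
  have hnc : ¬ G'.Preconnected := fun h => hX.1.2.2 ((SimpleGraph.connected_iff _).mpr ⟨h, ‹_›⟩)
  rw [SimpleGraph.Preconnected] at hnc; push_neg at hnc
  obtain ⟨v, w, hvw⟩ := hnc
  have key : ∀ u : Fin n, starCut u ⊆ X → X = starCut u := fun u hsub =>
    (Finset.eq_of_subset_of_card_le hsub (by rw [hcard, starCut_card])).symm
  by_cases h1 : ∀ u, G'.Reachable v u → u = v
  · refine ⟨v, key v ?_⟩
    intro e he
    induction e using Sym2.ind with
    | _ a b =>
      rw [mk_mem_starCut] at he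
      obtain ⟨hab, hv⟩ := he
      rcases hv with rfl | rfl
      · exact cut_cross (SimpleGraph.Reachable.refl v) (fun hr => hab (h1 b hr).symm)
      · rw [Sym2.eq_swap]
        exact cut_cross (SimpleGraph.Reachable.refl v) (fun hr => hab (h1 a hr))
  · push_neg at h1
    obtain ⟨a₁, ha₁r, ha₁v⟩ := h1
    by_cases h2 : ∀ u, ¬ G'.Reachable v u → u = w
    · refine ⟨w, key w ?_⟩
      intro e he
      induction e using Sym2.ind with
      | _ a b =>
        rw [mk_mem_starCut] at he
        obtain ⟨hab, hv⟩ := he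
        rcases hv with rfl | rfl
        · have hrb : G'.Reachable v b := by
            by_contra hr; exact hab (h2 b hr).symm
          rw [Sym2.eq_swap]
          exact cut_cross hrb hvw
        · have hra : G'.Reachable v a := by
            by_contra hr; exact hab (h2 a hr)
          exact cut_cross hra hvw
    · push_neg at h2
      obtain ⟨b₁, hb₁r, hb₁w⟩ := h2
      exfalso
      set f : Fin n → Sym2 (Fin n) := fun u =>
        if u = v then s(a₁, b₁) else if G'.Reachable v u then s(u, w) else s(v, u) with hf
      have hmem : ∀ u ∈ (Finset.univ : Finset (Fin n)), f u ∈ X := by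
        intro u _
        simp only [hf]
        split_ifs with hv hr
        · exact cut_cross ha₁r hb₁r
        · exact cut_cross hr hvw
        · exact cut_cross (SimpleGraph.Reachable.refl v) hr
      have hinj : Set.InjOn f ↑(Finset.univ : Finset (Fin n)) := by
        intro u₁ _ u₂ _ heq
        simp only [hf] at heq
        by_cases p₁ : u₁ = v <;> by_cases p₂ : u₂ = v
        · rw [p₁, p₂]
        · rw [if_pos p₁, if_neg p₂] at heq
          by_cases r₂ : G'.Reachable v u₂
          · rw [if_pos r₂, Sym2.eq_iff] at heq
            rcases heq with ⟨rfl, rfl⟩ | ⟨rfl, rfl⟩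
            · exact absurd rfl hb₁w
            · exact absurd ha₁r hvw
          · rw [if_neg r₂, Sym2.eq_iff] at heq
            rcases heq with ⟨rfl, rfl⟩ | ⟨rfl, rfl⟩
            · exact absurd rfl ha₁v
            · exact absurd SimpleGraph.Reachable.rfl hb₁r
        · rw [if_neg p₁, if_pos p₂] at heq
          by_cases r₁ : G'.Reachable v u₁
          · rw [if_pos r₁, Sym2.eq_iff] at heq
            rcases heq with ⟨rfl, rfl⟩ | ⟨rfl, rfl⟩
            · exact absurd rfl hb₁w
            · exact absurd ha₁r hvw
          · rw [if_neg r₁, Sym2.eq_iff] at heq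
            rcases heq with ⟨rfl, rfl⟩ | ⟨rfl, rfl⟩
            · exact absurd rfl ha₁v
            · exact absurd SimpleGraph.Reachable.rfl hb₁r
        · rw [if_neg p₁, if_neg p₂] at heq
          by_cases r₁ : G'.Reachable v u₁ <;> by_cases r₂ : G'.Reachable v u₂
          · rw [if_pos r₁, if_pos r₂, Sym2.eq_iff] at heq
            rcases heq with ⟨h, -⟩ | ⟨rfl, rfl⟩
            · exact h
            · exact absurd r₁ hvw
          · rw [if_pos r₁, if_neg r₂, Sym2.eq_iff] at heq
            rcases heq with ⟨rfl, rfl⟩ | ⟨rfl, rfl⟩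
            · exact absurd rfl p₁
            · exact absurd SimpleGraph.Reachable.rfl hvw
          · rw [if_neg r₁, if_pos r₂, Sym2.eq_iff] at heq
            rcases heq with ⟨rfl, rfl⟩ | ⟨rfl, rfl⟩
            · exact absurd rfl p₂
            · exact absurd SimpleGraph.Reachable.rfl hvw
          · rw [if_neg r₁, if_neg r₂, Sym2.eq_iff] at heq
            rcases heq with ⟨-, h⟩ | ⟨rfl, rfl⟩
            · exact h
            · exact absurd rfl p₂
      have := Finset.card_le_card_of_injOn f hmem hinj
      rw [Finset.card_univ, Fintype.card_fin, hcard] at this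
      omega

lemma starCut_injective (hn : 2 < n) : Function.Injective (starCut (n := n)) := by
  intro v w h
  by_contra hvw
  obtain ⟨u, huw, huv⟩ : ∃ u : Fin n, u ≠ w ∧ u ≠ v := by
    have hpos : 0 < ((Finset.univ.erase v).erase w).card := by
      rw [Finset.card_erase_of_mem
        (Finset.mem_erase.mpr ⟨fun h' => hvw h'.symm, Finset.mem_univ w⟩),
        Finset.card_erase_of_mem (Finset.mem_univ v), Finset.card_univ, Fintype.card_fin]
      omega
    obtain ⟨u, hu⟩ := Finset.card_pos.mp hpos
    rw [Finset.mem_erase, Finset.mem_erase] at hu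
    exact ⟨u, hu.1, hu.2.1⟩
  have h1 : s(v, u) ∈ starCut v := mk_mem_starCut.mpr ⟨Ne.symm huv, Or.inl rfl⟩
  rw [h] at h1
  rw [mk_mem_starCut] at h1
  rcases h1.2 with h' | h'
  · exact hvw h'.symm
  · exact huw h'.symm

end Aux

/-- For `n > 2`, `X(Kₙ) ≅ Kₙ`. -/
theorem stmt_1 (n : ℕ) (hn : 2 < n) :
    Nonempty ((⊤ : SimpleGraph (Fin n)) ≃g mincutGraph (⊤ : SimpleGraph (Fin n))) := by
  classical
  have hbij : Function.Bijective
      (fun v : Fin n => (⟨starCut v, starCut_isMincut hn v⟩ :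
        {X : Finset (Sym2 (Fin n)) // IsMincut ⊤ X})) := by
    constructor
    · intro v w h
      exact starCut_injective hn (congrArg Subtype.val h)
    · rintro ⟨X, hX⟩
      obtain ⟨v, rfl⟩ := mincut_eq_starCut hn hX
      exact ⟨v, rfl⟩
  refine ⟨⟨Equiv.ofBijective _ hbij, ?_⟩⟩
  intro a b
  simp only [Equiv.ofBijective_apply, mincutGraph, SimpleGraph.fromRel_adj, top_adj]
  constructor
  · rintro ⟨hne, -⟩
    rintro rfl
    exact hne rfl
  · intro hab
    refine ⟨fun h => hab (starCut_injective hn (congrArg Subtype.val h)), Or.inl ⟨s(a, b), ?_⟩⟩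
    exact Finset.mem_inter.mpr
      ⟨mk_mem_starCut.mpr ⟨hab, Or.inl rfl⟩, mk_mem_starCut.mpr ⟨hab, Or.inr rfl⟩⟩
end

section
/- For the complete bipartite graph K_{n,n} with n > 2, the mincut graph X(K_{n,n}) is isomorphic to K_{n,n}. -/
open SimpleGraph

namespace KnnProof

open Finset

variable {n : ℕ}

abbrev KG (n : ℕ) := completeBipartiteGraph (Fin n) (Fin n)

lemma kg_adj {u v : Fin n ⊕ Fin n} :
    (KG n).Adj u v ↔ (∃ i j, u = .inl i ∧ v = .inr j) ∨ (∃ i j, u = .inr j ∧ v = .inl i) := by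
  cases u <;> cases v <;> simp [completeBipartiteGraph]

lemma kg_adj' (i j : Fin n) : (KG n).Adj (.inl i) (.inr j) := by simp [completeBipartiteGraph]

lemma kg_connected (hn : 0 < n) : (KG n).Connected := by
  rw [connected_iff]
  refine ⟨fun u v => ?_, ⟨Sum.inl ⟨0, hn⟩⟩⟩
  have key : ∀ w : Fin n ⊕ Fin n, (KG n).Reachable w (.inr ⟨0, hn⟩) := by
    rintro (i | j)
    · exact (kg_adj' i ⟨0, hn⟩).reachable
    · exact ((kg_adj' ⟨0, hn⟩ j).symm.reachable).trans (kg_adj' ⟨0, hn⟩ ⟨0, hn⟩).reachable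
  exact (key u).trans (key v).symm

/-- The star at a vertex, as a finset of edges. -/
def star (v : Fin n ⊕ Fin n) : Finset (Sym2 (Fin n ⊕ Fin n)) :=
  match v with
  | .inl i => univ.image (fun j : Fin n => s(.inl i, .inr j))
  | .inr j => univ.image (fun i : Fin n => s(.inl i, .inr j))

lemma sym2_mk_inj {i i' j j' : Fin n} :
    s((.inl i : Fin n ⊕ Fin n), .inr j) = s(.inl i', .inr j') ↔ i = i' ∧ j = j' := by
  rw [Sym2.eq_iff]; simp

lemma mem_star_inl {e : Sym2 (Fin n ⊕ Fin n)} {i : Fin n} :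
    e ∈ star (.inl i) ↔ ∃ j, e = s(.inl i, .inr j) := by
  simp [star, eq_comm]

lemma mem_star_inr {e : Sym2 (Fin n ⊕ Fin n)} {j : Fin n} :
    e ∈ star (.inr j) ↔ ∃ i, e = s(.inl i, .inr j) := by
  simp [star, eq_comm]

lemma card_star (v : Fin n ⊕ Fin n) : (star v).card = n := by
  cases v with
  | inl i =>
    rw [star, Finset.card_image_of_injective _ (fun a b h => ?_), Finset.card_univ,
      Fintype.card_fin]
    exact (sym2_mk_inj.mp h).2
  | inr j =>
    rw [star, Finset.card_image_of_injective _ (fun a b h => ?_), Finset.card_univ,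
      Fintype.card_fin]
    exact (sym2_mk_inj.mp h).1

lemma star_subset_edgeSet (v : Fin n ⊕ Fin n) : ↑(star v) ⊆ (KG n).edgeSet := by
  intro e he
  simp only [Finset.coe_sort_coe, Finset.mem_coe] at he
  cases v with
  | inl i => obtain ⟨j, rfl⟩ := mem_star_inl.mp he; exact kg_adj' i j
  | inr j => obtain ⟨i, rfl⟩ := mem_star_inr.mp he; exact kg_adj' i j

lemma not_connected_of_isolated {V : Type*} (H : SimpleGraph V) (v w : V) (hvw : v ≠ w)
    (h : ∀ u, ¬H.Adj v u) : ¬H.Connected := by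
  intro hc
  obtain ⟨p⟩ := hc.preconnected v w
  cases p with
  | nil => exact hvw rfl
  | cons h' _ => exact h _ h'

lemma star_isEdgeCut (hn : 0 < n) (v : Fin n ⊕ Fin n) : IsEdgeCut (KG n) (star v) := by
  refine ⟨kg_connected hn, star_subset_edgeSet v, ?_⟩
  have hiso : ∀ u, ¬((KG n).deleteEdges ↑(star v)).Adj v u := by
    intro u hadj
    rw [deleteEdges_adj] at hadj
    obtain ⟨hadj, hmem⟩ := hadj
    apply hmem
    rw [Finset.mem_coe]
    rcases kg_adj.mp hadj with ⟨i, j, rfl, rfl⟩ | ⟨i, j, rfl, rfl⟩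
    · exact mem_star_inl.mpr ⟨j, rfl⟩
    · rw [Sym2.eq_swap]
      exact mem_star_inr.mpr ⟨i, rfl⟩
  cases v with
  | inl i => exact not_connected_of_isolated _ _ (.inr ⟨0, hn⟩) (by simp) hiso
  | inr j => exact not_connected_of_isolated _ _ (.inl ⟨0, hn⟩) (by simp) hiso

section Cross

def sideL (A : Finset (Fin n ⊕ Fin n)) : Finset (Fin n) := univ.filter (fun i => .inl i ∈ A)
def sideR (A : Finset (Fin n ⊕ Fin n)) : Finset (Fin n) := univ.filter (fun j => .inr j ∈ A)

def crossP (A : Finset (Fin n ⊕ Fin n)) : Finset (Fin n × Fin n) :=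
  (sideL A) ×ˢ (sideR A)ᶜ ∪ (sideL A)ᶜ ×ˢ (sideR A)

def crossF (A : Finset (Fin n ⊕ Fin n)) : Finset (Sym2 (Fin n ⊕ Fin n)) :=
  (crossP A).image (fun p => s(.inl p.1, .inr p.2))

lemma card_crossF (A : Finset (Fin n ⊕ Fin n)) :
    (crossF A).card = (sideL A).card * (n - (sideR A).card)
      + (n - (sideL A).card) * (sideR A).card := by
  have hinj : Function.Injective
      (fun p : Fin n × Fin n => s((.inl p.1 : Fin n ⊕ Fin n), .inr p.2)) := by
    rintro p q h
    obtain ⟨h1, h2⟩ := sym2_mk_inj.mp h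
    exact Prod.ext h1 h2
  have hdisj : Disjoint ((sideL A) ×ˢ (sideR A)ᶜ) ((sideL A)ᶜ ×ˢ (sideR A)) := by
    rw [Finset.disjoint_left]
    rintro ⟨i, j⟩ h1 h2
    simp only [Finset.mem_product, Finset.mem_compl] at h1 h2
    exact h2.1 h1.1
  rw [crossF, Finset.card_image_of_injective _ hinj, crossP,
    Finset.card_union_of_disjoint hdisj, Finset.card_product, Finset.card_product,
    Finset.card_compl, Finset.card_compl, Fintype.card_fin]

lemma mem_crossF {A : Finset (Fin n ⊕ Fin n)} {e : Sym2 (Fin n ⊕ Fin n)} :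
    e ∈ crossF A ↔ ∃ i j, e = s(.inl i, .inr j) ∧
      ((Sum.inl i ∈ A ∧ Sum.inr j ∉ A) ∨ (Sum.inl i ∉ A ∧ Sum.inr j ∈ A)) := by
  simp only [crossF, crossP, Finset.mem_image, Finset.mem_union, Finset.mem_product,
    Finset.mem_compl, sideL, sideR, Finset.mem_filter, Finset.mem_univ, true_and]
  constructor
  · rintro ⟨⟨i, j⟩, hp, rfl⟩
    exact ⟨i, j, rfl, by tauto⟩
  · rintro ⟨i, j, rfl, h⟩
    exact ⟨⟨i, j⟩, by tauto, rfl⟩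

end Cross

lemma arith_lb {n a b : ℕ} (hn : 2 < n) (ha : a ≤ n) (hb : b ≤ n)
    (h0 : ¬(a = 0 ∧ b = 0)) (h1 : ¬(a = n ∧ b = n)) :
    n ≤ a * (n - b) + (n - a) * b ∧
    (a * (n - b) + (n - a) * b = n →
      (a = 1 ∧ b = 0) ∨ (a = 0 ∧ b = 1) ∨ (a = n ∧ b = n - 1) ∨ (a = n - 1 ∧ b = n)) := by
  have mul_eq_one : ∀ x y : ℕ, 0 < y → x * y = y → x = 1 := fun x y hy h =>
    Nat.eq_of_mul_eq_mul_right hy (h.trans (one_mul y).symm)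
  rcases Nat.eq_zero_or_pos b with rfl | hbpos
  · have ha0 : 0 < a := Nat.pos_of_ne_zero (fun h => h0 ⟨h, rfl⟩)
    have hf : a * (n - 0) + (n - a) * 0 = a * n := by simp
    rw [hf]
    exact ⟨Nat.le_mul_of_pos_left n ha0,
      fun h => Or.inl ⟨mul_eq_one a n (by omega) h, rfl⟩⟩
  rcases eq_or_lt_of_le hb with hbn | hbn
  · have han : a < n := lt_of_le_of_ne ha (fun h => h1 ⟨h, hbn⟩)
    have hf : a * (n - b) + (n - a) * b = (n - a) * n := by
      subst hbn; simp [Nat.sub_self]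
    rw [hf]
    refine ⟨Nat.le_mul_of_pos_left n (by omega), fun h => ?_⟩
    have : n - a = 1 := mul_eq_one _ n (by omega) h
    exact Or.inr (Or.inr (Or.inr ⟨by omega, hbn⟩))
  rcases Nat.eq_zero_or_pos a with rfl | hapos
  · have hf : 0 * (n - b) + (n - 0) * b = b * n := by simp [Nat.mul_comm]
    rw [hf]
    exact ⟨Nat.le_mul_of_pos_left n hbpos,
      fun h => Or.inr (Or.inl ⟨rfl, mul_eq_one b n (by omega) h⟩)⟩
  rcases eq_or_lt_of_le ha with han | han
  · have hf : a * (n - b) + (n - a) * b = (n - b) * n := by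
      subst han; simp [Nat.sub_self, Nat.mul_comm]
    rw [hf]
    refine ⟨Nat.le_mul_of_pos_left n (by omega), fun h => ?_⟩
    have : n - b = 1 := mul_eq_one _ n (by omega) h
    exact Or.inr (Or.inr (Or.inl ⟨han, by omega⟩))
  have key : n < a * (n - b) + (n - a) * b := by
    have h1' : (n - b) ≤ a * (n - b) := Nat.le_mul_of_pos_left _ hapos
    have h2' : b ≤ (n - a) * b := Nat.le_mul_of_pos_left _ (by omega)
    rcases Nat.lt_or_ge 1 a with h | h
    · have : 2 * (n - b) ≤ a * (n - b) := Nat.mul_le_mul_right _ h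
      omega
    · have ha1 : a = 1 := by omega
      subst ha1
      have : 2 * b ≤ (n - 1) * b := Nat.mul_le_mul_right _ (by omega)
      omega
  exact ⟨key.le, fun h => absurd h (by omega)⟩

lemma exists_side {V : Type*} [Fintype V] {G : SimpleGraph V} {X : Finset (Sym2 V)}
    (h : IsEdgeCut G X) :
    ∃ A : Finset V, (∃ u, u ∈ A) ∧ (∃ w, w ∉ A) ∧
      ∀ a b, a ∈ A → b ∉ A → G.Adj a b → s(a, b) ∈ X := by
  classical
  obtain ⟨hc, _, hnc⟩ := h
  have hne : Nonempty V := hc.nonempty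
  have hnp : ¬(G.deleteEdges ↑X).Preconnected := fun hp => hnc ((connected_iff _).mpr ⟨hp, hne⟩)
  rw [Preconnected] at hnp
  push_neg at hnp
  obtain ⟨u, w, huw⟩ := hnp
  refine ⟨univ.filter (fun x => (G.deleteEdges ↑X).Reachable u x),
    ⟨u, by simp⟩, ⟨w, by simp [huw]⟩, ?_⟩
  intro a b ha hb hab
  by_contra hX
  apply hb
  simp only [Finset.mem_filter, Finset.mem_univ, true_and] at ha ⊢
  exact ha.trans (SimpleGraph.Adj.reachable (by rw [deleteEdges_adj]; exact ⟨hab, hX⟩))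

lemma cut_card (hn : 2 < n) {X : Finset (Sym2 (Fin n ⊕ Fin n))} (h : IsEdgeCut (KG n) X) :
    n ≤ X.card ∧ (X.card = n → ∃ v, X = star v) := by
  obtain ⟨A, ⟨u, hu⟩, ⟨w, hw⟩, hcl⟩ := exists_side h
  have hsub : crossF A ⊆ X := by
    intro e he
    obtain ⟨i, j, rfl, hc⟩ := mem_crossF.mp he
    rcases hc with ⟨h1, h2⟩ | ⟨h1, h2⟩
    · exact hcl _ _ h1 h2 (kg_adj' i j)
    · rw [Sym2.eq_swap]; exact hcl _ _ h2 h1 (kg_adj' i j).symm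
  have hL_mem : ∀ i : Fin n, i ∈ sideL A ↔ Sum.inl i ∈ A := by
    intro i; simp [sideL]
  have hR_mem : ∀ j : Fin n, j ∈ sideR A ↔ Sum.inr j ∈ A := by
    intro j; simp [sideR]
  have ha : (sideL A).card ≤ n := by
    simpa using Finset.card_le_card (Finset.subset_univ (sideL A))
  have hb : (sideR A).card ≤ n := by
    simpa using Finset.card_le_card (Finset.subset_univ (sideR A))
  have h0 : ¬((sideL A).card = 0 ∧ (sideR A).card = 0) := by
    rintro ⟨h1, h2⟩
    rw [Finset.card_eq_zero] at h1 h2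
    cases u with
    | inl i =>
      have : i ∈ sideL A := (hL_mem i).mpr hu
      rw [h1] at this; simp at this
    | inr j =>
      have : j ∈ sideR A := (hR_mem j).mpr hu
      rw [h2] at this; simp at this
  have h1' : ¬((sideL A).card = n ∧ (sideR A).card = n) := by
    rintro ⟨h1, h2⟩
    have e1 : sideL A = univ := Finset.eq_univ_of_card _ (by simpa using h1)
    have e2 : sideR A = univ := Finset.eq_univ_of_card _ (by simpa using h2)
    apply hw
    cases w with
    | inl i => exact (hL_mem i).mp (by rw [e1]; exact Finset.mem_univ i)
    | inr j => exact (hR_mem j).mp (by rw [e2]; exact Finset.mem_univ j)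
  obtain ⟨hlb, heq⟩ := arith_lb hn ha hb h0 h1'
  have hcard : n ≤ (crossF A).card := by rw [card_crossF]; exact hlb
  refine ⟨hcard.trans (Finset.card_le_card hsub), fun hXn => ?_⟩
  have hXc : crossF A = X :=
    Finset.eq_of_subset_of_card_le hsub (by rw [hXn]; exact hcard)
  have hcn : (crossF A).card = n := by rw [hXc, hXn]
  rw [card_crossF] at hcn
  rcases heq hcn with ⟨ha1, hb0⟩ | ⟨ha0, hb1⟩ | ⟨han, hbn1⟩ | ⟨han1, hbn⟩
  · -- A = {inl i}
    obtain ⟨i, hi⟩ := Finset.card_eq_one.mp ha1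
    have hR : sideR A = ∅ := Finset.card_eq_zero.mp hb0
    refine ⟨.inl i, ?_⟩
    rw [← hXc]
    ext e
    rw [mem_crossF, mem_star_inl]
    constructor
    · rintro ⟨i', j, rfl, hc⟩
      rcases hc with ⟨h1, _⟩ | ⟨_, h2⟩
      · have : i' ∈ sideL A := (hL_mem i').mpr h1
        rw [hi] at this
        simp only [Finset.mem_singleton] at this
        exact ⟨j, by rw [this]⟩
      · have : j ∈ sideR A := (hR_mem j).mpr h2
        rw [hR] at this; simp at this
    · rintro ⟨j, rfl⟩
      refine ⟨i, j, rfl, Or.inl ⟨(hL_mem i).mp (by rw [hi]; simp), fun hj => ?_⟩⟩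
      have : j ∈ sideR A := (hR_mem j).mpr hj
      rw [hR] at this; simp at this
  · -- A = {inr j}
    obtain ⟨j, hj⟩ := Finset.card_eq_one.mp hb1
    have hL : sideL A = ∅ := Finset.card_eq_zero.mp ha0
    refine ⟨.inr j, ?_⟩
    rw [← hXc]
    ext e
    rw [mem_crossF, mem_star_inr]
    constructor
    · rintro ⟨i, j', rfl, hc⟩
      rcases hc with ⟨h1, _⟩ | ⟨_, h2⟩
      · have : i ∈ sideL A := (hL_mem i).mpr h1
        rw [hL] at this; simp at this
      · have : j' ∈ sideR A := (hR_mem j').mpr h2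
        rw [hj] at this
        simp only [Finset.mem_singleton] at this
        exact ⟨i, by rw [this]⟩
    · rintro ⟨i, rfl⟩
      refine ⟨i, j, rfl, Or.inr ⟨fun hi => ?_, (hR_mem j).mp (by rw [hj]; simp)⟩⟩
      have : i ∈ sideL A := (hL_mem i).mpr hi
      rw [hL] at this; simp at this
  · -- Aᶜ = {inr j}
    have e1 : sideL A = univ := Finset.eq_univ_of_card _ (by simpa using han)
    have hcompl : ((sideR A)ᶜ : Finset (Fin n)).card = 1 := by
      rw [Finset.card_compl, Fintype.card_fin, hbn1]
      omega
    obtain ⟨j, hj⟩ := Finset.card_eq_one.mp hcompl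
    have hRj : ∀ j' : Fin n, Sum.inr j' ∈ A ↔ j' ≠ j := by
      intro j'
      rw [← hR_mem, ← Finset.notMem_compl, hj, Finset.mem_singleton]
    have hLall : ∀ i : Fin n, Sum.inl i ∈ A := fun i =>
      (hL_mem i).mp (by rw [e1]; exact Finset.mem_univ i)
    refine ⟨.inr j, ?_⟩
    rw [← hXc]
    ext e
    rw [mem_crossF, mem_star_inr]
    constructor
    · rintro ⟨i, j', rfl, hc⟩
      rcases hc with ⟨_, h2⟩ | ⟨h1, _⟩
      · have : j' = j := by
          by_contra hne
          exact h2 ((hRj j').mpr hne)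
        exact ⟨i, by rw [this]⟩
      · exact absurd (hLall i) h1
    · rintro ⟨i, rfl⟩
      exact ⟨i, j, rfl, Or.inl ⟨hLall i, fun hj' => ((hRj j).mp hj') rfl⟩⟩
  · -- Aᶜ = {inl i}
    have e2 : sideR A = univ := Finset.eq_univ_of_card _ (by simpa using hbn)
    have hcompl : ((sideL A)ᶜ : Finset (Fin n)).card = 1 := by
      rw [Finset.card_compl, Fintype.card_fin, han1]
      omega
    obtain ⟨i, hi⟩ := Finset.card_eq_one.mp hcompl
    have hLi : ∀ i' : Fin n, Sum.inl i' ∈ A ↔ i' ≠ i := by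
      intro i'
      rw [← hL_mem, ← Finset.notMem_compl, hi, Finset.mem_singleton]
    have hRall : ∀ j : Fin n, Sum.inr j ∈ A := fun j =>
      (hR_mem j).mp (by rw [e2]; exact Finset.mem_univ j)
    refine ⟨.inl i, ?_⟩
    rw [← hXc]
    ext e
    rw [mem_crossF, mem_star_inl]
    constructor
    · rintro ⟨i', j, rfl, hc⟩
      rcases hc with ⟨_, h2⟩ | ⟨h1, _⟩
      · exact absurd (hRall j) h2
      · have : i' = i := by
          by_contra hne
          exact h1 ((hLi i').mpr hne)
        exact ⟨j, by rw [this]⟩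
    · rintro ⟨j, rfl⟩
      exact ⟨i, j, rfl, Or.inr ⟨fun hi' => ((hLi i).mp hi') rfl, hRall j⟩⟩

lemma edgeConn_eq (hn : 2 < n) : edgeConn (KG n) = n := by
  have h0 : 0 < n := by omega
  have hmem : n ∈ {m | ∃ X : Finset (Sym2 (Fin n ⊕ Fin n)), X.card = m ∧ IsEdgeCut (KG n) X} :=
    ⟨star (.inl ⟨0, h0⟩), card_star _, star_isEdgeCut h0 _⟩
  refine le_antisymm (Nat.sInf_le hmem) (le_csInf ⟨n, hmem⟩ ?_)
  rintro m ⟨X, rfl, hX⟩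
  exact (cut_card hn hX).1

lemma mincut_iff (hn : 2 < n) {X : Finset (Sym2 (Fin n ⊕ Fin n))} :
    IsMincut (KG n) X ↔ ∃ v, X = star v := by
  constructor
  · rintro ⟨hc, hcard⟩
    exact (cut_card hn hc).2 (hcard.trans (edgeConn_eq hn))
  · rintro ⟨v, rfl⟩
    exact ⟨star_isEdgeCut (by omega) v, (card_star v).trans (edgeConn_eq hn).symm⟩

lemma star_inj (hn : 2 < n) : Function.Injective (star (n := n)) := by
  have h0 : (0:ℕ) < n := by omega
  have h1 : (1:ℕ) < n := by omega
  have exj : ∀ j : Fin n, ∃ j', j' ≠ j := by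
    intro j
    by_cases hj : j = ⟨0, h0⟩
    · exact ⟨⟨1, h1⟩, by rw [hj]; intro h; simpa using congrArg Fin.val h⟩
    · exact ⟨⟨0, h0⟩, fun h => hj h.symm⟩
  intro u v h
  cases u with
  | inl i =>
    cases v with
    | inl i' =>
      have hmem : s((.inl i : Fin n ⊕ Fin n), .inr ⟨0, h0⟩) ∈ star (Sum.inl i' : Fin n ⊕ Fin n) := by
        rw [← h]; exact mem_star_inl.mpr ⟨⟨0, h0⟩, rfl⟩
      obtain ⟨j, hj⟩ := mem_star_inl.mp hmem
      rw [(sym2_mk_inj.mp hj).1]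
    | inr j =>
      obtain ⟨j', hj'⟩ := exj j
      have hmem : s((.inl i : Fin n ⊕ Fin n), .inr j') ∈ star (Sum.inr j : Fin n ⊕ Fin n) := by
        rw [← h]; exact mem_star_inl.mpr ⟨j', rfl⟩
      obtain ⟨i', hi'⟩ := mem_star_inr.mp hmem
      exact absurd (sym2_mk_inj.mp hi').2 hj'
  | inr j =>
    cases v with
    | inl i =>
      obtain ⟨j', hj'⟩ := exj j
      have hmem : s((.inl i : Fin n ⊕ Fin n), .inr j') ∈ star (Sum.inr j : Fin n ⊕ Fin n) := by
        rw [h]; exact mem_star_inl.mpr ⟨j', rfl⟩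
      obtain ⟨i', hi'⟩ := mem_star_inr.mp hmem
      exact absurd (sym2_mk_inj.mp hi').2 hj'
    | inr j' =>
      have hmem : s((.inl ⟨0, h0⟩ : Fin n ⊕ Fin n), .inr j) ∈ star (Sum.inr j' : Fin n ⊕ Fin n) := by
        rw [← h]; exact mem_star_inr.mpr ⟨⟨0, h0⟩, rfl⟩
      obtain ⟨i', hi'⟩ := mem_star_inr.mp hmem
      rw [(sym2_mk_inj.mp hi').2]

lemma star_inter {u v : Fin n ⊕ Fin n} (hne : u ≠ v) :
    (star u ∩ star v).Nonempty ↔ (KG n).Adj u v := by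
  constructor
  · rintro ⟨e, he⟩
    rw [Finset.mem_inter] at he
    obtain ⟨he1, he2⟩ := he
    cases u with
    | inl i =>
      cases v with
      | inl i' =>
        obtain ⟨j, rfl⟩ := mem_star_inl.mp he1
        obtain ⟨j', hj'⟩ := mem_star_inl.mp he2
        exact absurd (congrArg Sum.inl (sym2_mk_inj.mp hj').1) hne
      | inr j => exact kg_adj' i j
    | inr j =>
      cases v with
      | inl i => exact (kg_adj' i j).symm
      | inr j' =>
        obtain ⟨i, rfl⟩ := mem_star_inr.mp he1
        obtain ⟨i', hi'⟩ := mem_star_inr.mp he2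
        exact absurd (congrArg Sum.inr (sym2_mk_inj.mp hi').2) hne
  · intro hadj
    rcases kg_adj.mp hadj with ⟨i, j, rfl, rfl⟩ | ⟨i, j, rfl, rfl⟩
    · exact ⟨s(.inl i, .inr j), Finset.mem_inter.mpr
        ⟨mem_star_inl.mpr ⟨j, rfl⟩, mem_star_inr.mpr ⟨i, rfl⟩⟩⟩
    · exact ⟨s(.inl i, .inr j), Finset.mem_inter.mpr
        ⟨mem_star_inr.mpr ⟨i, rfl⟩, mem_star_inl.mpr ⟨j, rfl⟩⟩⟩

end KnnProof

/-- For `n > 2`, `X(K_{n,n}) ≅ K_{n,n}`. -/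
theorem stmt_2 (n : ℕ) (hn : 2 < n) :
    Nonempty (completeBipartiteGraph (Fin n) (Fin n) ≃g
      mincutGraph (completeBipartiteGraph (Fin n) (Fin n))) := by
  classical
  refine ⟨?_⟩
  have hmc : ∀ v : Fin n ⊕ Fin n, IsMincut (KnnProof.KG n) (KnnProof.star v) :=
    fun v => (KnnProof.mincut_iff hn).mpr ⟨v, rfl⟩
  let f : (Fin n ⊕ Fin n) → {X : Finset (Sym2 (Fin n ⊕ Fin n)) // IsMincut (KnnProof.KG n) X} :=
    fun v => ⟨KnnProof.star v, hmc v⟩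
  have hfinj : Function.Injective f := fun u v h =>
    KnnProof.star_inj hn (congrArg Subtype.val h)
  have hfbij : Function.Bijective f := by
    refine ⟨hfinj, ?_⟩
    rintro ⟨X, hX⟩
    obtain ⟨v, rfl⟩ := (KnnProof.mincut_iff hn).mp hX
    exact ⟨v, rfl⟩
  refine ⟨Equiv.ofBijective f hfbij, ?_⟩
  intro u v
  show (mincutGraph (KnnProof.KG n)).Adj (f u) (f v) ↔ (KnnProof.KG n).Adj u v
  rw [mincutGraph, SimpleGraph.fromRel_adj]
  constructor
  · rintro ⟨hne, h | h⟩
    · have huv : u ≠ v := fun h' => hne (congrArg f h')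
      exact (KnnProof.star_inter huv).mp h
    · have huv : v ≠ u := fun h' => hne (congrArg f h').symm
      exact ((KnnProof.star_inter huv).mp h).symm
  · intro hadj
    have huv : u ≠ v := hadj.ne
    exact ⟨fun h => huv (hfinj h), Or.inl ((KnnProof.star_inter huv).mpr hadj)⟩
end

section
/- Let X = ⟨A, Ā⟩ and Y = ⟨B, B̄⟩ be two crossing (overlapping) mincuts of a simple connected graph G with edge-connectivity λ. Then the number of edges between Ā∩B̄ and A∩B̄, between Ā∩B̄ and Ā∩B, between A∩B and A∩B̄, and between A∩B and Ā∩B each equal λ/2, and there are no edges between Ā∩B̄ and A∩B, nor between Ā∩B and A∩B̄. -/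
open SimpleGraph

section Aux
set_option linter.unusedSectionVars false
set_option linter.unusedVariables false

variable {V : Type*} [Fintype V] [DecidableEq V] (G : SimpleGraph V)

lemma betweenEdges_comm (S T : Set V) : betweenEdges G S T = betweenEdges G T S := by
  unfold betweenEdges
  congr 1
  ext e
  constructor <;> rintro ⟨he, a, ha, b, hb, rfl⟩ <;>
    exact ⟨he, b, hb, a, ha, Sym2.eq_swap⟩

lemma betweenEdges_union_left (S₁ S₂ T : Set V) (h12 : Disjoint S₁ S₂)
    (h1T : Disjoint S₁ T) (h2T : Disjoint S₂ T) :
    betweenEdges G (S₁ ∪ S₂) T = betweenEdges G S₁ T + betweenEdges G S₂ T := by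
  unfold betweenEdges
  rw [← Set.ncard_union_eq ?_ (Set.toFinite _) (Set.toFinite _)]
  · congr 1
    ext e
    simp only [Set.mem_setOf_eq, Set.mem_union]
    constructor
    · rintro ⟨he, a, (ha | ha), b, hb, rfl⟩
      · exact Or.inl ⟨he, a, ha, b, hb, rfl⟩
      · exact Or.inr ⟨he, a, ha, b, hb, rfl⟩
    · rintro (⟨he, a, ha, b, hb, rfl⟩ | ⟨he, a, ha, b, hb, rfl⟩)
      exacts [⟨he, a, Or.inl ha, b, hb, rfl⟩, ⟨he, a, Or.inr ha, b, hb, rfl⟩]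
  · rw [Set.disjoint_left]
    rintro e ⟨he, a, ha, b, hb, rfl⟩ ⟨he', a', ha', b', hb', heq⟩
    rw [Sym2.eq_iff] at heq
    rcases heq with ⟨rfl, rfl⟩ | ⟨rfl, rfl⟩
    · exact (Set.disjoint_left.mp h12 ha) ha'
    · exact (Set.disjoint_left.mp h1T ha) hb'

lemma betweenEdges_union_right (S T₁ T₂ : Set V) (h12 : Disjoint T₁ T₂)
    (h1S : Disjoint T₁ S) (h2S : Disjoint T₂ S) :
    betweenEdges G S (T₁ ∪ T₂) = betweenEdges G S T₁ + betweenEdges G S T₂ := by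
  rw [betweenEdges_comm, betweenEdges_union_left G T₁ T₂ S h12 h1S h2S,
    betweenEdges_comm G T₁, betweenEdges_comm G T₂]

lemma edgeConn_le_betweenEdges (hG : G.Connected) (S : Set V)
    (hS : S.Nonempty) (hSc : Sᶜ.Nonempty) :
    edgeConn G ≤ betweenEdges G S Sᶜ := by
  classical
  set E : Set (Sym2 V) := {e | e ∈ G.edgeSet ∧ ∃ a ∈ S, ∃ b ∈ Sᶜ, e = s(a, b)} with hE
  have hEfin : E.Finite := Set.toFinite _
  have hcard : betweenEdges G S Sᶜ = hEfin.toFinset.card := by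
    rw [betweenEdges, ← hE, ← Set.ncard_coe_finset, Set.Finite.coe_toFinset]
  rw [hcard]
  apply Nat.sInf_le
  refine ⟨hEfin.toFinset, rfl, hG, ?_, ?_⟩
  · intro e he
    rw [Set.Finite.coe_toFinset] at he
    exact he.1
  · intro hcon
    obtain ⟨s, hs⟩ := hS
    obtain ⟨t, ht⟩ := hSc
    obtain ⟨w⟩ := hcon.preconnected s t
    obtain ⟨d, _, hd1, hd2⟩ := w.exists_boundary_dart S hs ht
    have hadj := d.adj
    rw [SimpleGraph.deleteEdges_adj] at hadj
    exact hadj.2 (Finset.mem_coe.mpr (hEfin.mem_toFinset.mpr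
      ⟨hadj.1, d.toProd.1, hd1, d.toProd.2, hd2, rfl⟩))

end Aux

/-- For crossing mincuts `X = ⟨A,Ā⟩`, `Y = ⟨B,B̄⟩`, the four quadrant edge
counts each equal `λ/2`, and the two "diagonal" counts are zero. -/
theorem stmt_5 {V : Type*} [Fintype V] [DecidableEq V] (G : SimpleGraph V)
    (X Y : Finset (Sym2 V)) (A B : Set V)
    (hX : MincutSides G X A) (hY : MincutSides G Y B) (hcross : Crossing A B) :
    2 * betweenEdges G (Aᶜ ∩ Bᶜ) (A ∩ Bᶜ) = edgeConn G ∧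
    2 * betweenEdges G (Aᶜ ∩ Bᶜ) (Aᶜ ∩ B) = edgeConn G ∧
    2 * betweenEdges G (A ∩ B) (A ∩ Bᶜ) = edgeConn G ∧
    2 * betweenEdges G (A ∩ B) (Aᶜ ∩ B) = edgeConn G ∧
    betweenEdges G (Aᶜ ∩ Bᶜ) (A ∩ B) = 0 ∧
    betweenEdges G (Aᶜ ∩ B) (A ∩ Bᶜ) = 0 := by
  classical
  obtain ⟨⟨⟨hGconn, -, -⟩, hXcard⟩, -, -, hXset, -, -⟩ := hX
  obtain ⟨⟨-, hYcard⟩, -, -, hYset, -, -⟩ := hY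
  obtain ⟨⟨p, hpA, hpB⟩, ⟨r, hrA, hrB⟩, ⟨q, hqA, hqB⟩, ⟨s, hsA, hsB⟩⟩ := hcross
  -- pairwise disjointness of the four corners
  have dPQ : Disjoint (A ∩ B) (A ∩ Bᶜ) :=
    Set.disjoint_left.mpr fun x hx hx' => hx'.2 hx.2
  have dPR : Disjoint (A ∩ B) (Aᶜ ∩ B) :=
    Set.disjoint_left.mpr fun x hx hx' => hx'.1 hx.1
  have dPS : Disjoint (A ∩ B) (Aᶜ ∩ Bᶜ) :=
    Set.disjoint_left.mpr fun x hx hx' => hx'.1 hx.1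
  have dQR : Disjoint (A ∩ Bᶜ) (Aᶜ ∩ B) :=
    Set.disjoint_left.mpr fun x hx hx' => hx'.1 hx.1
  have dQS : Disjoint (A ∩ Bᶜ) (Aᶜ ∩ Bᶜ) :=
    Set.disjoint_left.mpr fun x hx hx' => hx'.1 hx.1
  have dRS : Disjoint (Aᶜ ∩ B) (Aᶜ ∩ Bᶜ) :=
    Set.disjoint_left.mpr fun x hx hx' => hx'.2 hx.2
  -- the two mincut cardinalities
  have hXcount : betweenEdges G A Aᶜ = edgeConn G := by
    rw [betweenEdges, ← hXset, Set.ncard_coe_finset, hXcard]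
  have hYcount : betweenEdges G B Bᶜ = edgeConn G := by
    rw [betweenEdges, ← hYset, Set.ncard_coe_finset, hYcard]
  -- split |X| into quadrants
  have hXsum : edgeConn G =
      betweenEdges G (A ∩ B) (Aᶜ ∩ B) + betweenEdges G (A ∩ B) (Aᶜ ∩ Bᶜ) +
      betweenEdges G (A ∩ Bᶜ) (Aᶜ ∩ B) + betweenEdges G (A ∩ Bᶜ) (Aᶜ ∩ Bᶜ) := by
    rw [← hXcount]
    have h1 : betweenEdges G A Aᶜ
        = betweenEdges G ((A ∩ B) ∪ (A ∩ Bᶜ)) ((Aᶜ ∩ B) ∪ (Aᶜ ∩ Bᶜ)) := by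
      rw [Set.inter_union_compl A B, Set.inter_union_compl Aᶜ B]
    rw [h1, betweenEdges_union_left G _ _ _ dPQ
        (Set.disjoint_union_right.mpr ⟨dPR, dPS⟩)
        (Set.disjoint_union_right.mpr ⟨dQR, dQS⟩),
      betweenEdges_union_right G _ _ _ dRS dPR.symm dPS.symm,
      betweenEdges_union_right G _ _ _ dRS dQR.symm dQS.symm]
    omega
  -- split |Y| into quadrants
  have hBdec : (A ∩ B) ∪ (Aᶜ ∩ B) = B := by
    ext x; simp only [Set.mem_union, Set.mem_inter_iff, Set.mem_compl_iff]; tauto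
  have hBcdec : (A ∩ Bᶜ) ∪ (Aᶜ ∩ Bᶜ) = Bᶜ := by
    ext x; simp only [Set.mem_union, Set.mem_inter_iff, Set.mem_compl_iff]; tauto
  have hYsum : edgeConn G =
      betweenEdges G (A ∩ B) (A ∩ Bᶜ) + betweenEdges G (A ∩ B) (Aᶜ ∩ Bᶜ) +
      betweenEdges G (Aᶜ ∩ B) (A ∩ Bᶜ) + betweenEdges G (Aᶜ ∩ B) (Aᶜ ∩ Bᶜ) := by
    rw [← hYcount]
    have h1 : betweenEdges G B Bᶜ
        = betweenEdges G ((A ∩ B) ∪ (Aᶜ ∩ B)) ((A ∩ Bᶜ) ∪ (Aᶜ ∩ Bᶜ)) := by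
      rw [hBdec, hBcdec]
    rw [h1, betweenEdges_union_left G _ _ _ dPR
        (Set.disjoint_union_right.mpr ⟨dPQ, dPS⟩)
        (Set.disjoint_union_right.mpr ⟨dQR.symm, dRS⟩),
      betweenEdges_union_right G _ _ _ dQS dPQ.symm dPS.symm,
      betweenEdges_union_right G _ _ _ dQS dQR dRS.symm]
    omega
  -- corner cut lower bounds
  have corner : ∀ (P Q1 Q2 Q3 : Set V), P.Nonempty → Pᶜ = Q1 ∪ (Q2 ∪ Q3) →
      Disjoint Q1 Q2 → Disjoint Q1 Q3 → Disjoint Q2 Q3 →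
      Disjoint Q1 P → Disjoint Q2 P → Disjoint Q3 P → Pᶜ.Nonempty →
      edgeConn G ≤ betweenEdges G P Q1 + betweenEdges G P Q2 + betweenEdges G P Q3 := by
    intro P Q1 Q2 Q3 hP hPc d12 d13 d23 d1P d2P d3P hPcne
    have := edgeConn_le_betweenEdges G hGconn P hP hPcne
    rw [hPc] at this
    rwa [betweenEdges_union_right G _ _ _
        (Set.disjoint_union_right.mpr ⟨d12, d13⟩) d1P
        (Set.disjoint_union_left.mpr ⟨d2P, d3P⟩),
      betweenEdges_union_right G _ _ _ d23 d2P d3P, ← Nat.add_assoc] at this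
  have hPc : (A ∩ B)ᶜ = (A ∩ Bᶜ) ∪ ((Aᶜ ∩ B) ∪ (Aᶜ ∩ Bᶜ)) := by
    ext x; simp only [Set.mem_union, Set.mem_inter_iff, Set.mem_compl_iff]; tauto
  have hQc : (A ∩ Bᶜ)ᶜ = (A ∩ B) ∪ ((Aᶜ ∩ B) ∪ (Aᶜ ∩ Bᶜ)) := by
    ext x; simp only [Set.mem_union, Set.mem_inter_iff, Set.mem_compl_iff]; tauto
  have hRc : (Aᶜ ∩ B)ᶜ = (A ∩ B) ∪ ((A ∩ Bᶜ) ∪ (Aᶜ ∩ Bᶜ)) := by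
    ext x; simp only [Set.mem_union, Set.mem_inter_iff, Set.mem_compl_iff]; tauto
  have hSc : (Aᶜ ∩ Bᶜ)ᶜ = (A ∩ B) ∪ ((A ∩ Bᶜ) ∪ (Aᶜ ∩ B)) := by
    ext x; simp only [Set.mem_union, Set.mem_inter_iff, Set.mem_compl_iff]; tauto
  have hPineq := corner (A ∩ B) (A ∩ Bᶜ) (Aᶜ ∩ B) (Aᶜ ∩ Bᶜ) ⟨p, hpA, hpB⟩ hPc
    dQR dQS dRS dPQ.symm dPR.symm dPS.symm ⟨r, fun h => hrA h.1⟩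
  have hQineq := corner (A ∩ Bᶜ) (A ∩ B) (Aᶜ ∩ B) (Aᶜ ∩ Bᶜ) ⟨q, hqA, hqB⟩ hQc
    dPR dPS dRS dPQ dQR.symm dQS.symm ⟨p, fun h => h.2 hpB⟩
  have hRineq := corner (Aᶜ ∩ B) (A ∩ B) (A ∩ Bᶜ) (Aᶜ ∩ Bᶜ) ⟨r, hrA, hrB⟩ hRc
    dPQ dPS dQS dPR dQR dRS.symm ⟨p, fun h => h.1 hpA⟩
  have hSineq := corner (Aᶜ ∩ Bᶜ) (A ∩ B) (A ∩ Bᶜ) (Aᶜ ∩ B) ⟨s, hsA, hsB⟩ hSc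
    dPQ dPR dQR dPS dQS dRS ⟨p, fun h => h.1 hpA⟩
  -- symmetry bridges
  have c1 := betweenEdges_comm G (A ∩ B) (A ∩ Bᶜ)
  have c2 := betweenEdges_comm G (A ∩ B) (Aᶜ ∩ B)
  have c3 := betweenEdges_comm G (A ∩ B) (Aᶜ ∩ Bᶜ)
  have c4 := betweenEdges_comm G (A ∩ Bᶜ) (Aᶜ ∩ B)
  have c5 := betweenEdges_comm G (A ∩ Bᶜ) (Aᶜ ∩ Bᶜ)
  have c6 := betweenEdges_comm G (Aᶜ ∩ B) (Aᶜ ∩ Bᶜ)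
  refine ⟨?_, ?_, ?_, ?_, ?_, ?_⟩ <;> omega
end

section
/- If X = ⟨A,Ā⟩ and Y = ⟨B,B̄⟩ are crossing mincuts of a simple connected graph G, then the edge sets X and Y are disjoint: X ∩ Y = ∅. -/
open SimpleGraph

section Aux

set_option linter.unusedSectionVars false

variable {V : Type*} [Fintype V] [DecidableEq V] (G : SimpleGraph V)

/-- Edges of `G` with one endpoint in `S`, the other in `T`. -/
def bE (S T : Set V) : Set (Sym2 V) :=
  {e | e ∈ G.edgeSet ∧ ∃ a ∈ S, ∃ b ∈ T, e = s(a, b)}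

variable {G}

lemma bE_comm (S T : Set V) : bE G S T = bE G T S := by
  ext e
  simp only [bE, Set.mem_setOf_eq]
  constructor <;> rintro ⟨he, a, ha, b, hb, rfl⟩ <;>
    exact ⟨he, b, hb, a, ha, Sym2.eq_swap⟩

lemma bE_union_left (S₁ S₂ T : Set V) :
    bE G (S₁ ∪ S₂) T = bE G S₁ T ∪ bE G S₂ T := by
  ext e
  simp only [bE, Set.mem_setOf_eq, Set.mem_union]
  constructor
  · rintro ⟨he, a, (ha | ha), b, hb, rfl⟩
    · exact Or.inl ⟨he, a, ha, b, hb, rfl⟩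
    · exact Or.inr ⟨he, a, ha, b, hb, rfl⟩
  · rintro (⟨he, a, ha, b, hb, rfl⟩ | ⟨he, a, ha, b, hb, rfl⟩)
    · exact ⟨he, a, Or.inl ha, b, hb, rfl⟩
    · exact ⟨he, a, Or.inr ha, b, hb, rfl⟩

lemma bE_union_right (S T₁ T₂ : Set V) :
    bE G S (T₁ ∪ T₂) = bE G S T₁ ∪ bE G S T₂ := by
  rw [bE_comm, bE_union_left, bE_comm T₁ S, bE_comm T₂ S]

lemma bE_disjoint {S₁ T₁ S₂ T₂ : Set V}
    (h1 : Disjoint S₁ S₂ ∨ Disjoint T₁ T₂)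
    (h2 : Disjoint S₁ T₂ ∨ Disjoint T₁ S₂) :
    Disjoint (bE G S₁ T₁) (bE G S₂ T₂) := by
  rw [Set.disjoint_left]
  rintro e ⟨he, a, ha, b, hb, rfl⟩ ⟨he', c, hc, d, hd, hcd⟩
  rw [Sym2.eq_iff] at hcd
  rcases hcd with ⟨rfl, rfl⟩ | ⟨rfl, rfl⟩
  · rcases h1 with h | h
    · exact Set.disjoint_left.mp h ha hc
    · exact Set.disjoint_left.mp h hb hd
  · rcases h2 with h | h
    · exact Set.disjoint_left.mp h ha hd
    · exact Set.disjoint_left.mp h hb hc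

lemma ncard_bE_union_right {S T₁ T₂ : Set V}
    (h1 : Disjoint T₁ T₂) (h2 : Disjoint S T₂ ∨ Disjoint T₁ S) :
    (bE G S (T₁ ∪ T₂)).ncard = (bE G S T₁).ncard + (bE G S T₂).ncard := by
  rw [bE_union_right, Set.ncard_union_eq (bE_disjoint (Or.inr h1) h2)
    (Set.toFinite _) (Set.toFinite _)]

lemma ncard_bE_union_left {S₁ S₂ T : Set V}
    (h1 : Disjoint S₁ S₂) (h2 : Disjoint S₁ T ∨ Disjoint T S₂) :
    (bE G (S₁ ∪ S₂) T).ncard = (bE G S₁ T).ncard + (bE G S₂ T).ncard := by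
  rw [bE_union_left, Set.ncard_union_eq (bE_disjoint (Or.inl h1) h2)
    (Set.toFinite _) (Set.toFinite _)]

/-- If a set `S` and its complement are both nonempty, the boundary edges of `S`
form an edge cut, so their number is at least the edge connectivity. -/
lemma edgeConn_le_bE (hG : G.Connected) {S : Set V} (hS : S.Nonempty)
    (hS' : Sᶜ.Nonempty) : edgeConn G ≤ (bE G S Sᶜ).ncard := by
  classical
  obtain ⟨F, hFc⟩ : ∃ F : Finset (Sym2 V), (↑F : Set (Sym2 V)) = bE G S Sᶜ :=
    ⟨(Set.toFinite (bE G S Sᶜ)).toFinset, Set.Finite.coe_toFinset _⟩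
  have hcut : IsEdgeCut G F := by
    refine ⟨hG, ?_, ?_⟩
    · rw [hFc]; rintro e ⟨he, -⟩; exact he
    · intro hconn
      obtain ⟨a, ha⟩ := hS
      obtain ⟨b, hb⟩ := hS'
      obtain ⟨p⟩ := hconn a b
      obtain ⟨d, -, hd1, hd2⟩ := p.exists_boundary_dart S ha hb
      have hadj : G.Adj d.toProd.1 d.toProd.2 ∧ s(d.toProd.1, d.toProd.2) ∉ (↑F : Set (Sym2 V)) :=
        deleteEdges_adj.mp d.adj
      exact hadj.2 ((Set.ext_iff.mp hFc s(d.toProd.1, d.toProd.2)).mpr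
        ⟨G.mem_edgeSet.mpr hadj.1, d.toProd.1, hd1, d.toProd.2, hd2, rfl⟩)
  have : (bE G S Sᶜ).ncard = F.card := by rw [← hFc, Set.ncard_coe_finset]
  rw [this]
  exact Nat.sInf_le ⟨F, rfl, hcut⟩

lemma mincutSides_bE {X : Finset (Sym2 V)} {A : Set V}
    (hX : MincutSides G X A) : (bE G A Aᶜ).ncard = edgeConn G := by
  have h : (↑X : Set (Sym2 V)) = bE G A Aᶜ := hX.2.2.2.1
  rw [← h, Set.ncard_coe_finset, hX.1.2]

/-- The key counting lemma: for crossing mincuts there are no edges between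
`A ∩ Bᶜ` and `Aᶜ ∩ B`. -/
lemma key_lemma {X Y : Finset (Sym2 V)} {A B : Set V}
    (hX : MincutSides G X A) (hY : MincutSides G Y B) (hcross : Crossing A B) :
    bE G (A ∩ Bᶜ) (Aᶜ ∩ B) = ∅ := by
  classical
  set P := A ∩ B with hPdef
  set Q := A ∩ Bᶜ with hQdef
  set R := Aᶜ ∩ B with hRdef
  set T := Aᶜ ∩ Bᶜ with hTdef
  have hG : G.Connected := hX.1.1.1
  -- pairwise disjointness of the corners
  have dPQ : Disjoint P Q := by
    rw [Set.disjoint_left]; rintro x ⟨-, h1⟩ ⟨-, h2⟩; exact h2 h1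
  have dPR : Disjoint P R := by
    rw [Set.disjoint_left]; rintro x ⟨h1, -⟩ ⟨h2, -⟩; exact h2 h1
  have dPT : Disjoint P T := by
    rw [Set.disjoint_left]; rintro x ⟨h1, -⟩ ⟨h2, -⟩; exact h2 h1
  have dQR : Disjoint Q R := by
    rw [Set.disjoint_left]; rintro x ⟨h1, -⟩ ⟨h2, -⟩; exact h2 h1
  have dQT : Disjoint Q T := by
    rw [Set.disjoint_left]; rintro x ⟨h1, -⟩ ⟨h2, -⟩; exact h2 h1
  have dRT : Disjoint R T := by
    rw [Set.disjoint_left]; rintro x ⟨-, h1⟩ ⟨-, h2⟩; exact h2 h1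
  -- decompositions
  have hA : A = P ∪ Q := (Set.inter_union_compl A B).symm
  have hAc : Aᶜ = R ∪ T := (Set.inter_union_compl Aᶜ B).symm
  have hB : B = P ∪ R := by
    ext x; simp only [hPdef, hRdef, Set.mem_union, Set.mem_inter_iff,
      Set.mem_compl_iff]; tauto
  have hBc : Bᶜ = Q ∪ T := by
    ext x; simp only [hQdef, hTdef, Set.mem_union, Set.mem_inter_iff,
      Set.mem_compl_iff]; tauto
  have hPc : Pᶜ = Q ∪ (R ∪ T) := by
    ext x; simp only [hPdef, hQdef, hRdef, hTdef, Set.mem_union,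
      Set.mem_inter_iff, Set.mem_compl_iff]; tauto
  have hU : A ∪ B = P ∪ (Q ∪ R) := by
    ext x; simp only [hPdef, hQdef, hRdef, Set.mem_union, Set.mem_inter_iff,
      Set.mem_compl_iff]; tauto
  have hUc : (A ∪ B)ᶜ = T := by
    rw [Set.compl_union]
  -- cardinalities, with n S T := (bE G S T).ncard
  have dA : (bE G A Aᶜ).ncard = edgeConn G := mincutSides_bE hX
  have dB : (bE G B Bᶜ).ncard = edgeConn G := mincutSides_bE hY
  have eA : (bE G A Aᶜ).ncard =
      ((bE G P R).ncard + (bE G P T).ncard) +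
      ((bE G Q R).ncard + (bE G Q T).ncard) := by
    rw [hAc, hA, ncard_bE_union_left dPQ (Or.inl (Set.disjoint_union_right.mpr ⟨dPR, dPT⟩)),
      ncard_bE_union_right dRT (Or.inl dPT),
      ncard_bE_union_right dRT (Or.inl dQT)]
  have eB : (bE G B Bᶜ).ncard =
      ((bE G P Q).ncard + (bE G P T).ncard) +
      ((bE G R Q).ncard + (bE G R T).ncard) := by
    rw [hBc, hB, ncard_bE_union_left dPR (Or.inl (Set.disjoint_union_right.mpr ⟨dPQ, dPT⟩)),
      ncard_bE_union_right dQT (Or.inl dPT),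
      ncard_bE_union_right dQT (Or.inl dRT)]
  have eP : (bE G P Pᶜ).ncard =
      (bE G P Q).ncard + ((bE G P R).ncard + (bE G P T).ncard) := by
    rw [hPc, ncard_bE_union_right (Set.disjoint_union_right.mpr ⟨dQR, dQT⟩)
        (Or.inl (Set.disjoint_union_right.mpr ⟨dPR, dPT⟩)),
      ncard_bE_union_right dRT (Or.inl dPT)]
  have eU : (bE G (A ∪ B) (A ∪ B)ᶜ).ncard =
      (bE G P T).ncard + ((bE G Q T).ncard + (bE G R T).ncard) := by
    rw [hUc, hU, ncard_bE_union_left (Set.disjoint_union_right.mpr ⟨dPQ, dPR⟩)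
        (Or.inl dPT),
      ncard_bE_union_left dQR (Or.inl dQT)]
  have hRQ : (bE G R Q).ncard = (bE G Q R).ncard := by rw [bE_comm]
  -- lower bounds
  have hPlb : edgeConn G ≤ (bE G P Pᶜ).ncard := by
    refine edgeConn_le_bE hG hcross.1 ?_
    obtain ⟨x, hx⟩ := hcross.2.2.2
    exact ⟨x, fun h => hx.1 h.1⟩
  have hUlb : edgeConn G ≤ (bE G (A ∪ B) (A ∪ B)ᶜ).ncard := by
    refine edgeConn_le_bE hG ?_ ?_
    · obtain ⟨x, hx⟩ := hcross.1; exact ⟨x, Or.inl hx.1⟩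
    · rw [hUc]; exact hcross.2.2.2
  -- submodularity count
  have hsum : (bE G A Aᶜ).ncard + (bE G B Bᶜ).ncard =
      (bE G P Pᶜ).ncard + (bE G (A ∪ B) (A ∪ B)ᶜ).ncard
        + 2 * (bE G Q R).ncard := by
    rw [eA, eB, eP, eU, hRQ]; ring
  have hzero : (bE G Q R).ncard = 0 := by
    rw [dA, dB] at hsum
    omega
  exact (Set.ncard_eq_zero (Set.toFinite _)).mp hzero

/-- `MincutSides` for the complementary side. -/
lemma mincutSides_compl {X : Finset (Sym2 V)} {A : Set V}
    (hX : MincutSides G X A) : MincutSides G X Aᶜ := by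
  obtain ⟨h1, h2, h3, h4, h5, h6⟩ := hX
  refine ⟨h1, h3, by rwa [compl_compl], ?_, h6, by rwa [compl_compl]⟩
  rw [h4]
  ext e
  simp only [Set.mem_setOf_eq, compl_compl]
  constructor <;> rintro ⟨he, a, ha, b, hb, rfl⟩ <;>
    exact ⟨he, b, hb, a, ha, Sym2.eq_swap⟩

end Aux

/-- Crossing mincuts have disjoint edge sets. -/
theorem stmt_6 {V : Type*} [Fintype V] [DecidableEq V] (G : SimpleGraph V)
    (X Y : Finset (Sym2 V)) (A B : Set V)
    (hX : MincutSides G X A) (hY : MincutSides G Y B) (hcross : Crossing A B) :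
    X ∩ Y = ∅ := by
  classical
  have h1 : bE G (A ∩ Bᶜ) (Aᶜ ∩ B) = ∅ := key_lemma hX hY hcross
  have hcross' : Crossing A Bᶜ := by
    obtain ⟨c1, c2, c3, c4⟩ := hcross
    exact ⟨c3, c4, by rwa [compl_compl], by rwa [compl_compl]⟩
  have h2 : bE G (A ∩ B) (Aᶜ ∩ Bᶜ) = ∅ := by
    have := key_lemma hX (mincutSides_compl hY) hcross'
    rwa [compl_compl] at this
  rw [Finset.eq_empty_iff_forall_notMem]
  intro e he
  rw [Finset.mem_inter] at he
  have heX : (e : Sym2 V) ∈ (↑X : Set (Sym2 V)) := he.1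
  have heY : (e : Sym2 V) ∈ (↑Y : Set (Sym2 V)) := he.2
  rw [hX.2.2.2.1] at heX
  rw [hY.2.2.2.1] at heY
  obtain ⟨hes, a, ha, b, hb, rfl⟩ := heX
  obtain ⟨-, c, hc, d, hd, hcd⟩ := heY
  rw [Sym2.eq_iff] at hcd
  rcases hcd with ⟨rfl, rfl⟩ | ⟨rfl, rfl⟩
  · have : s(a, b) ∈ bE G (A ∩ B) (Aᶜ ∩ Bᶜ) :=
      ⟨hes, a, ⟨ha, hc⟩, b, ⟨hb, hd⟩, rfl⟩
    rw [h2] at this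
    exact this
  · have : s(a, b) ∈ bE G (A ∩ Bᶜ) (Aᶜ ∩ B) :=
      ⟨hes, a, ⟨ha, hd⟩, b, ⟨hb, hc⟩, rfl⟩
    rw [h1] at this
    exact this
end

section
/- Let G be a simple connected graph such that every vertex of G has degree λ(G) and G possesses at least one non-trivial mincut. Then the number of mincuts of G is strictly greater than |V(G)|, and consequently G is not isomorphic to its mincut graph X(G). -/
open SimpleGraph

lemma no_adj_not_reachable {V : Type*} (G' : SimpleGraph V) {v u : V} (h : v ≠ u)
    (hv : ∀ w, ¬ G'.Adj v w) : ¬ G'.Reachable v u := by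
  rintro ⟨p⟩
  cases p with
  | nil => exact h rfl
  | cons hadj _ => exact hv _ hadj

lemma coe_incFinset {V : Type*} [Fintype V] [DecidableEq V] (G : SimpleGraph V)
    [DecidableRel G.Adj] (v : V) :
    ↑(G.incidenceFinset v) = G.incidenceSet v := by
  simp [incidenceFinset, Set.coe_toFinset]

/-- If every vertex of a connected graph `G` has degree `λ(G)` and `G` has a
non-trivial mincut, then `G` has more than `|V(G)|` mincuts, and `G ≇ X(G)`. -/
theorem stmt_11 {V : Type*} [Fintype V] [DecidableEq V] (G : SimpleGraph V) [DecidableRel G.Adj]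
    (hconn : G.Connected) (hdeg : ∀ v : V, G.degree v = edgeConn G)
    (hex : ∃ X : Finset (Sym2 V), IsMincut G X ∧
      ¬∃ v : V, (↑X : Set (Sym2 V)) = G.incidenceSet v) :
    Fintype.card V < Nat.card {X : Finset (Sym2 V) // IsMincut G X} ∧
    ¬Nonempty (G ≃g mincutGraph G) := by
  classical
  obtain ⟨X₀, hX₀, hX₀nt⟩ := hex
  have hne : Nonempty V := hconn.nonempty
  have hVnt : Nontrivial V := by
    by_contra hns
    rw [not_nontrivial_iff_subsingleton] at hns
    exact hX₀.1.2.2 (Connected.mk fun a b => by rw [Subsingleton.elim a b])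
  have hpos : 0 < edgeConn G := by
    rcases Nat.eq_zero_or_pos (edgeConn G) with h0 | h
    · exfalso
      have hX0 : X₀ = ∅ := Finset.card_eq_zero.mp (hX₀.2.trans h0)
      apply hX₀.1.2.2
      rw [hX0]
      simpa using hconn
    · exact h
  -- every vertex gives a (trivial) mincut
  have hinc : ∀ v : V, IsMincut G (G.incidenceFinset v) := by
    intro v
    refine ⟨⟨hconn, ?_, ?_⟩, ?_⟩
    · rw [coe_incFinset]; exact G.incidenceSet_subset v
    · obtain ⟨u, hu⟩ := exists_ne v
      intro hc
      refine no_adj_not_reachable _ (Ne.symm hu) ?_ (hc.preconnected v u)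
      intro w hw
      rw [deleteEdges_adj, coe_incFinset] at hw
      exact hw.2 (G.mk'_mem_incidenceSet_left_iff.mpr hw.1)
    · rw [card_incidenceFinset_eq_degree]; exact hdeg v
  -- injectivity of v ↦ incidenceFinset v
  have hinj : Function.Injective (fun v : V => G.incidenceFinset v) := by
    intro u v huv
    by_contra hne'
    simp only at huv
    have hset : G.incidenceSet u = G.incidenceSet v := by
      rw [← coe_incFinset, ← coe_incFinset, huv]
    have hdu : 0 < G.degree u := (hdeg u).symm ▸ hpos
    obtain ⟨w, hw⟩ := (G.degree_pos_iff_exists_adj u).mp hdu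
    have hmem : s(u, w) ∈ G.incidenceSet v := by
      rw [← hset]; exact G.mk'_mem_incidenceSet_left_iff.mpr hw
    have hvw : v = w := by
      rcases (G.mk'_mem_incidenceSet_iff.mp hmem).2 with h | h
      · exact absurd h.symm hne'
      · exact h
    subst hvw
    have hadjuv : G.Adj u v := hw
    -- only neighbor of u is v
    have hu_nbr : ∀ w, G.Adj u w → w = v := by
      intro w hw'
      have : s(u, w) ∈ G.incidenceSet v := by
        rw [← hset]; exact G.mk'_mem_incidenceSet_left_iff.mpr hw'
      rcases (G.mk'_mem_incidenceSet_iff.mp this).2 with h | h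
      · exact absurd h.symm hne'
      · exact h.symm
    have hv_nbr : ∀ w, G.Adj v w → w = u := by
      intro w hw'
      have : s(v, w) ∈ G.incidenceSet u := by
        rw [hset]; exact G.mk'_mem_incidenceSet_left_iff.mpr hw'
      rcases (G.mk'_mem_incidenceSet_iff.mp this).2 with h | h
      · exact absurd h hne'
      · exact h.symm
    -- every vertex is u or v
    have key : ∀ (y x : V) (p : G.Walk y x), (y = u ∨ y = v) → (x = u ∨ x = v) := by
      intro y x p
      induction p with
      | nil => exact id
      | cons hadj p ih =>
        rintro (rfl | rfl)
        · exact ih (Or.inr (hu_nbr _ hadj))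
        · exact ih (Or.inl (hv_nbr _ hadj))
    have hall : ∀ x : V, x = u ∨ x = v := by
      intro x
      obtain ⟨p⟩ := hconn.preconnected u x
      exact key u x p (Or.inl rfl)
    -- every edge is s(u,v)
    have hedge : G.edgeSet ⊆ {s(u, v)} := by
      intro e he
      induction e with
      | h a b =>
        have hab : G.Adj a b := he
        rcases hall a with rfl | rfl <;> rcases hall b with rfl | rfl
        · exact absurd rfl hab.ne
        · rfl
        · exact Sym2.eq_swap
        · exact absurd rfl hab.ne
    have hincu : G.incidenceSet u = {s(u, v)} := by
      apply Set.Subset.antisymm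
      · exact fun e he => hedge (G.incidenceSet_subset u he)
      · rintro e rfl
        exact G.mk'_mem_incidenceSet_left_iff.mpr hadjuv
    apply hX₀nt
    refine ⟨u, ?_⟩
    rw [hincu]
    apply Set.Subset.antisymm
    · exact fun e he => hedge (hX₀.1.2.1 he)
    · have hX₀ne : (↑X₀ : Set (Sym2 V)).Nonempty := by
        rw [Finset.coe_nonempty, ← Finset.card_pos, hX₀.2]
        exact hpos
      obtain ⟨e, he⟩ := hX₀ne
      have := hedge (hX₀.1.2.1 he)
      rintro e' rfl
      rwa [← this]
  -- the injection from Option V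
  let f : Option V → {X : Finset (Sym2 V) // IsMincut G X} := fun o =>
    match o with
    | some v => ⟨G.incidenceFinset v, hinc v⟩
    | none => ⟨X₀, hX₀⟩
  have hfinj : Function.Injective f := by
    intro a b hab
    have hab' := Subtype.ext_iff.mp hab
    simp only [f] at hab'
    match a, b with
    | some u, some v => exact congrArg some (hinj hab')
    | some u, none =>
      have h2 : G.incidenceFinset u = X₀ := hab'
      exact absurd ⟨u, by rw [← h2, coe_incFinset]⟩ hX₀nt
    | none, some v =>
      have h2 : X₀ = G.incidenceFinset v := hab'
      exact absurd ⟨v, by rw [h2, coe_incFinset]⟩ hX₀nt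
    | none, none => rfl
  have hcard : Fintype.card V < Nat.card {X : Finset (Sym2 V) // IsMincut G X} := by
    have h1 : Nat.card (Option V) ≤ Nat.card {X : Finset (Sym2 V) // IsMincut G X} :=
      Nat.card_le_card_of_injective f hfinj
    rw [Nat.card_eq_fintype_card, Fintype.card_option] at h1
    omega
  refine ⟨hcard, ?_⟩
  rintro ⟨e⟩
  have := Nat.card_congr e.toEquiv
  rw [Nat.card_eq_fintype_card] at this
  omega
end

section
/- If G is a simple connected graph that is super-λ but not regular, then the number of mincuts of G is strictly less than |V(G)|, so |V(X(G))| < |V(G)| and G is not isomorphic to X(G). -/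
open SimpleGraph

/-- If `G` is connected, super-λ but not regular, then `G` has fewer mincuts
than vertices, so `|V(X(G))| < |V(G)|` and `G ≇ X(G)`. -/
theorem stmt_12 {V : Type*} [Fintype V] [DecidableEq V] (G : SimpleGraph V) [DecidableRel G.Adj]
    (hconn : G.Connected)
    (hsuper : ∀ X : Finset (Sym2 V), IsMincut G X →
      ∃ v : V, G.degree v = G.minDegree ∧ ↑X = G.incidenceSet v)
    (hnreg : ¬∃ r : ℕ, G.IsRegularOfDegree r) :
    Nat.card {X : Finset (Sym2 V) // IsMincut G X} < Fintype.card V ∧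
    ¬Nonempty (G ≃g mincutGraph G) := by
  haveI : Fintype {X : Finset (Sym2 V) // IsMincut G X} := Fintype.ofFinite _
  set f : {X : Finset (Sym2 V) // IsMincut G X} → V :=
    fun X => (hsuper X.1 X.2).choose with hf
  have hfdeg : ∀ X, G.degree (f X) = G.minDegree := fun X => (hsuper X.1 X.2).choose_spec.1
  have hfinc : ∀ X, (X.1 : Set (Sym2 V)) = G.incidenceSet (f X) :=
    fun X => (hsuper X.1 X.2).choose_spec.2
  have hinj : Function.Injective f := by
    intro X Y h
    apply Subtype.ext
    apply Finset.coe_injective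
    rw [hfinc X, hfinc Y, h]
  obtain ⟨w, hw⟩ : ∃ w : V, G.degree w ≠ G.minDegree := by
    by_contra h
    push_neg at h
    exact hnreg ⟨G.minDegree, fun v => h v⟩
  have hwr : w ∉ Set.range f := by
    rintro ⟨X, rfl⟩
    exact hw (hfdeg X)
  have hlt : Fintype.card {X : Finset (Sym2 V) // IsMincut G X} < Fintype.card V :=
    Fintype.card_lt_of_injective_of_notMem f hinj hwr
  rw [Nat.card_eq_fintype_card]
  refine ⟨hlt, fun ⟨e⟩ => ?_⟩
  exact absurd (Fintype.card_congr e.toEquiv) (by omega)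
end

section
/- For n ≥ 3, the mincut graph of the Cartesian product K_n □ K_2 is isomorphic to the join K_1 ∨ (K_n □ K_2), and the mincut graph of K_1 ∨ (K_n □ K_2) is isomorphic to K_n □ K_2. Hence K_n □ K_2 is periodic with period 2 under the mincut operator. -/
open SimpleGraph

/-- The join `K₁ ∨ H`: a new vertex adjacent to every vertex of `H`. -/
def coneGraph {W : Type*} (H : SimpleGraph W) : SimpleGraph (Unit ⊕ W) :=
  SimpleGraph.fromRel (fun a b =>
    match a, b with
    | Sum.inl _, Sum.inr _ => True
    | Sum.inr x, Sum.inr y => H.Adj x y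
    | _, _ => False)


section Generic
variable {V : Type*} [Fintype V] [DecidableEq V]

open Classical in
noncomputable def crossEdges (G : SimpleGraph V) (A : Finset V) : Finset (Sym2 V) :=
  Finset.univ.filter (fun e : Sym2 V => ∃ a ∈ A, ∃ b, b ∉ A ∧ G.Adj a b ∧ e = s(a, b))

lemma mem_crossEdges {G : SimpleGraph V} {A : Finset V} {e : Sym2 V} :
    e ∈ crossEdges G A ↔ ∃ a ∈ A, ∃ b, b ∉ A ∧ G.Adj a b ∧ e = s(a, b) := by
  classical
  simp [crossEdges]

open Classical in
noncomputable def crossPairs (G : SimpleGraph V) (A : Finset V) : Finset (V × V) :=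
  (A ×ˢ Aᶜ).filter (fun p => G.Adj p.1 p.2)

lemma mem_crossPairs {G : SimpleGraph V} {A : Finset V} {p : V × V} :
    p ∈ crossPairs G A ↔ p.1 ∈ A ∧ p.2 ∉ A ∧ G.Adj p.1 p.2 := by
  classical
  simp [crossPairs, and_assoc]

lemma card_crossEdges (G : SimpleGraph V) (A : Finset V) :
    (crossEdges G A).card = (crossPairs G A).card := by
  classical
  refine (Finset.card_bij (fun p _ => s(p.1, p.2)) ?_ ?_ ?_).symm
  · rintro ⟨a, b⟩ hp
    rw [mem_crossPairs] at hp
    exact mem_crossEdges.2 ⟨a, hp.1, b, hp.2.1, hp.2.2, rfl⟩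
  · rintro ⟨a, b⟩ hab ⟨c, d⟩ hcd h
    rw [mem_crossPairs] at hab hcd
    rw [Sym2.eq_iff] at h
    rcases h with ⟨rfl, rfl⟩ | ⟨rfl, rfl⟩
    · rfl
    · exact absurd hab.1 hcd.2.1
  · intro e he
    rw [mem_crossEdges] at he
    obtain ⟨a, ha, b, hb, hadj, rfl⟩ := he
    exact ⟨⟨a, b⟩, mem_crossPairs.2 ⟨ha, hb, hadj⟩, rfl⟩

lemma crossEdges_compl (G : SimpleGraph V) (A : Finset V) :
    crossEdges G Aᶜ = crossEdges G A := by
  ext e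
  simp only [mem_crossEdges, Finset.mem_compl, not_not]
  constructor
  · rintro ⟨a, ha, b, hb, hadj, rfl⟩
    exact ⟨b, hb, a, ha, hadj.symm, Sym2.eq_swap⟩
  · rintro ⟨a, ha, b, hb, hadj, rfl⟩
    exact ⟨b, hb, a, ha, hadj.symm, Sym2.eq_swap⟩

lemma crossEdges_subset_edgeSet {G : SimpleGraph V} {A : Finset V} :
    ↑(crossEdges G A) ⊆ G.edgeSet := by
  intro e he
  rw [Finset.mem_coe, mem_crossEdges] at he
  obtain ⟨a, _, b, _, hadj, rfl⟩ := he
  exact hadj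

lemma walk_stays {G : SimpleGraph V} {A : Finset V} :
    ∀ {u v : V}, (G.deleteEdges ↑(crossEdges G A)).Walk u v → u ∈ A → v ∈ A := by
  intro u v p
  induction p with
  | nil => exact id
  | cons h p ih =>
    intro hu
    rw [SimpleGraph.deleteEdges_adj] at h
    refine ih ?_
    by_contra hb
    exact h.2 (Finset.mem_coe.2 (mem_crossEdges.2 ⟨_, hu, _, hb, h.1, rfl⟩))

lemma isEdgeCut_crossEdges {G : SimpleGraph V} (hG : G.Connected) {A : Finset V}
    (hA : A.Nonempty) (hA' : Aᶜ.Nonempty) : IsEdgeCut G (crossEdges G A) := by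
  refine ⟨hG, crossEdges_subset_edgeSet, fun hc => ?_⟩
  obtain ⟨a, ha⟩ := hA
  obtain ⟨b, hb⟩ := hA'
  exact (Finset.mem_compl.1 hb) (walk_stays (hc.preconnected a b).some ha)

lemma exists_crossEdges_subset {G : SimpleGraph V} {X : Finset (Sym2 V)}
    (h : IsEdgeCut G X) : ∃ A : Finset V, A.Nonempty ∧ Aᶜ.Nonempty ∧ crossEdges G A ⊆ X := by
  classical
  obtain ⟨hc, hsub, hnc⟩ := h
  have hne : Nonempty V := hc.nonempty
  have hpc : ¬ (G.deleteEdges ↑X).Preconnected := fun hp =>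
    hnc ((SimpleGraph.connected_iff _).2 ⟨hp, hne⟩)
  rw [SimpleGraph.Preconnected] at hpc
  push_neg at hpc
  obtain ⟨u, v, huv⟩ := hpc
  refine ⟨Finset.univ.filter (fun w => (G.deleteEdges ↑X).Reachable u w), ⟨u, by simp [SimpleGraph.Reachable.refl]⟩,
    ⟨v, by simpa using huv⟩, ?_⟩
  intro e he
  rw [mem_crossEdges] at he
  obtain ⟨a, ha, b, hb, hadj, rfl⟩ := he
  simp only [Finset.mem_filter, Finset.mem_univ, true_and] at ha hb
  by_contra hX
  exact hb (ha.trans (SimpleGraph.Adj.reachable (SimpleGraph.deleteEdges_adj.2 ⟨hadj, hX⟩)))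

lemma edgeConn_eq_of {G : SimpleGraph V} {k : ℕ}
    (hex : ∃ X : Finset (Sym2 V), X.card = k ∧ IsEdgeCut G X)
    (hlow : ∀ A : Finset V, A.Nonempty → Aᶜ.Nonempty → k ≤ (crossEdges G A).card) :
    edgeConn G = k := by
  apply le_antisymm
  · exact Nat.sInf_le hex
  · apply le_csInf ⟨k, hex⟩
    rintro m ⟨X, rfl, hX⟩
    obtain ⟨A, hA, hA', hsub⟩ := exists_crossEdges_subset hX
    exact (hlow A hA hA').trans (Finset.card_le_card hsub)

lemma isMincut_iff_crossEdges {G : SimpleGraph V} (hG : G.Connected) {X : Finset (Sym2 V)}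
    (hlow : ∀ A : Finset V, A.Nonempty → Aᶜ.Nonempty → edgeConn G ≤ (crossEdges G A).card) :
    IsMincut G X ↔ ∃ A : Finset V, A.Nonempty ∧ Aᶜ.Nonempty ∧ X = crossEdges G A ∧
      (crossEdges G A).card = edgeConn G := by
  constructor
  · rintro ⟨hX, hcard⟩
    obtain ⟨A, hA, hA', hsub⟩ := exists_crossEdges_subset hX
    have h1 : edgeConn G ≤ (crossEdges G A).card := hlow A hA hA'
    have h2 : (crossEdges G A).card ≤ X.card := Finset.card_le_card hsub
    have heq : X = crossEdges G A :=
      (Finset.eq_of_subset_of_card_le hsub (by omega)).symm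
    exact ⟨A, hA, hA', heq, by omega⟩
  · rintro ⟨A, hA, hA', rfl, hcard⟩
    exact ⟨isEdgeCut_crossEdges hG hA hA', hcard⟩

lemma crossEdges_singleton_inter {G : SimpleGraph V} {u v : V} (huv : u ≠ v) :
    (crossEdges G {u} ∩ crossEdges G {v}).Nonempty ↔ G.Adj u v := by
  constructor
  · rintro ⟨e, he⟩
    rw [Finset.mem_inter, mem_crossEdges, mem_crossEdges] at he
    obtain ⟨⟨a, ha, b, hb, hadj, rfl⟩, ⟨c, hc, d, hd, hadj', h⟩⟩ := he
    simp only [Finset.mem_singleton] at ha hc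
    subst ha; subst hc
    rw [Sym2.eq_iff] at h
    rcases h with ⟨rfl, rfl⟩ | ⟨rfl, rfl⟩
    · exact absurd rfl huv
    · exact hadj
  · intro hadj
    refine ⟨s(u, v), Finset.mem_inter.2 ⟨?_, ?_⟩⟩
    · exact mem_crossEdges.2 ⟨u, by simp, v, by simpa using huv.symm, hadj, rfl⟩
    · exact mem_crossEdges.2 ⟨v, by simp, u, by simpa using huv, hadj.symm, Sym2.eq_swap⟩

lemma crossEdges_singleton_injective {G : SimpleGraph V} {u v : V}
    (h2 : ∃ x y, G.Adj u x ∧ G.Adj u y ∧ x ≠ y)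
    (h : crossEdges G {u} = crossEdges G {v}) : u = v := by
  by_contra huv
  obtain ⟨x, y, hx, hy, hxy⟩ := h2
  have hmx : s(u, x) ∈ crossEdges G {v} := h ▸
    mem_crossEdges.2 ⟨u, by simp, x, by simpa using hx.ne', hx, rfl⟩
  have hmy : s(u, y) ∈ crossEdges G {v} := h ▸
    mem_crossEdges.2 ⟨u, by simp, y, by simpa using hy.ne', hy, rfl⟩
  rw [mem_crossEdges] at hmx hmy
  obtain ⟨a, ha, b, hb, _, hab⟩ := hmx
  obtain ⟨c, hc, d, hd, _, hcd⟩ := hmy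
  simp only [Finset.mem_singleton] at ha hc
  subst ha; subst hc
  rw [Sym2.eq_iff] at hab hcd
  rcases hab with ⟨rfl, rfl⟩ | ⟨rfl, rfl⟩
  · exact huv rfl
  · rcases hcd with ⟨rfl, rfl⟩ | ⟨rfl, rfl⟩
    · exact huv rfl
    · exact hxy rfl

end Generic

abbrev PG (n : ℕ) : SimpleGraph (Fin n × Fin 2) :=
  (⊤ : SimpleGraph (Fin n)).boxProd (⊤ : SimpleGraph (Fin 2))

lemma prism_adj {n : ℕ} {x y : Fin n × Fin 2} :
    (PG n).Adj x y ↔ (x.1 ≠ y.1 ∧ x.2 = y.2) ∨ (x.2 ≠ y.2 ∧ x.1 = y.1) := by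
  simp [SimpleGraph.boxProd_adj]

def side {n : ℕ} (A : Finset (Fin n × Fin 2)) (j : Fin 2) : Finset (Fin n) :=
  Finset.univ.filter (fun i => (i, j) ∈ A)

lemma mem_side {n : ℕ} {A : Finset (Fin n × Fin 2)} {j : Fin 2} {i : Fin n} :
    i ∈ side A j ↔ (i, j) ∈ A := by simp [side]

section Count
variable {n : ℕ} (A : Finset (Fin n × Fin 2))

open Classical in
lemma count_same (j : Fin 2) :
    (((crossPairs (PG n) A).filter (fun p => p.1.2 = j ∧ p.2.2 = j)).card)
      = (side A j).card * (n - (side A j).card) := by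
  classical
  have : (((crossPairs (PG n) A).filter (fun p => p.1.2 = j ∧ p.2.2 = j)).card)
      = ((side A j) ×ˢ (side A j)ᶜ).card := by
    refine Finset.card_bij (fun p _ => (p.1.1, p.2.1)) ?_ ?_ ?_
    · rintro p hp
      rw [Finset.mem_filter] at hp
      obtain ⟨hp, hj1, hj2⟩ := hp
      rw [mem_crossPairs] at hp
      have e1 : p.1 = (p.1.1, j) := Prod.ext rfl hj1
      have e2 : p.2 = (p.2.1, j) := Prod.ext rfl hj2
      rw [Finset.mem_product, mem_side, Finset.mem_compl, mem_side]
      exact ⟨e1 ▸ hp.1, fun h => hp.2.1 (e2 ▸ h)⟩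
    · rintro p hp q hq h
      rw [Finset.mem_filter] at hp hq
      simp only [Prod.mk.injEq] at h
      exact Prod.ext (Prod.ext h.1 (hp.2.1.trans hq.2.1.symm))
        (Prod.ext h.2 (hp.2.2.trans hq.2.2.symm))
    · rintro ⟨a, b⟩ hab
      rw [Finset.mem_product, mem_side, Finset.mem_compl, mem_side] at hab
      refine ⟨((a, j), (b, j)), ?_, rfl⟩
      rw [Finset.mem_filter, mem_crossPairs]
      refine ⟨⟨hab.1, hab.2, ?_⟩, rfl, rfl⟩
      rw [prism_adj]
      exact Or.inl ⟨by rintro h; rw [show b = a from h.symm] at hab; exact hab.2 hab.1, rfl⟩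
  rw [this, Finset.card_product, Finset.card_compl, Fintype.card_fin]

open Classical in
lemma count_diff (j k : Fin 2) (hjk : j ≠ k) :
    (((crossPairs (PG n) A).filter (fun p => p.1.2 = j ∧ p.2.2 = k)).card)
      = ((side A j) \ (side A k)).card := by
  classical
  refine Finset.card_bij (fun p _ => p.1.1) ?_ ?_ ?_
  · rintro p hp
    rw [Finset.mem_filter] at hp
    obtain ⟨hp, hj1, hj2⟩ := hp
    rw [mem_crossPairs] at hp
    have hadj := hp.2.2
    rw [prism_adj] at hadj
    have hne : p.1.2 ≠ p.2.2 := by rw [hj1, hj2]; exact hjk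
    have heq : p.1.1 = p.2.1 := by
      rcases hadj with ⟨_, h⟩ | ⟨_, h⟩
      · exact absurd h hne
      · exact h
    have e1 : p.1 = (p.1.1, j) := Prod.ext rfl hj1
    have e2 : p.2 = (p.1.1, k) := Prod.ext heq.symm hj2
    rw [Finset.mem_sdiff, mem_side, mem_side]
    exact ⟨e1 ▸ hp.1, fun h => hp.2.1 (e2 ▸ h)⟩
  · rintro p hp q hq h
    rw [Finset.mem_filter] at hp hq
    obtain ⟨hp0, hj1, hj2⟩ := hp
    obtain ⟨hq0, hk1, hk2⟩ := hq
    rw [mem_crossPairs] at hp0 hq0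
    have hpe : p.1.1 = p.2.1 := by
      have := hp0.2.2; rw [prism_adj] at this
      rcases this with ⟨_, h'⟩ | ⟨_, h'⟩
      · exact absurd h' (by rw [hj1, hj2]; exact hjk)
      · exact h'
    have hqe : q.1.1 = q.2.1 := by
      have := hq0.2.2; rw [prism_adj] at this
      rcases this with ⟨_, h'⟩ | ⟨_, h'⟩
      · exact absurd h' (by rw [hk1, hk2]; exact hjk)
      · exact h'
    refine Prod.ext (Prod.ext h (hj1.trans hk1.symm))
      (Prod.ext ((hpe.symm.trans h).trans hqe) (hj2.trans hk2.symm))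
  · rintro a ha
    rw [Finset.mem_sdiff, mem_side, mem_side] at ha
    refine ⟨((a, j), (a, k)), ?_, rfl⟩
    rw [Finset.mem_filter, mem_crossPairs]
    refine ⟨⟨ha.1, ha.2, ?_⟩, rfl, rfl⟩
    rw [prism_adj]
    exact Or.inr ⟨hjk, rfl⟩

open Classical in
lemma card_crossPairs_prism :
    (crossPairs (PG n) A).card =
      (side A 0).card * (n - (side A 0).card) + (side A 1).card * (n - (side A 1).card)
      + ((side A 0) \ (side A 1)).card + ((side A 1) \ (side A 0)).card := by
  classical
  set P := crossPairs (PG n) A with hP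
  have split1 : ∀ (Q : Finset ((Fin n × Fin 2) × (Fin n × Fin 2)))
      (f : (Fin n × Fin 2) × (Fin n × Fin 2) → Fin 2),
      Q.card = (Q.filter (fun p => f p = 0)).card + (Q.filter (fun p => f p = 1)).card := by
    intro Q f
    rw [← Finset.card_filter_add_card_filter_not (p := fun p => f p = 0)]
    congr 1
    rw [Finset.filter_congr (q := fun p => f p = 1)
      (fun p _ => by constructor <;> (intro h; omega))]
  have e0 : P.card = (P.filter (fun p => p.1.2 = 0)).card
      + (P.filter (fun p => p.1.2 = 1)).card := split1 P (fun p => p.1.2)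
  have e1 : (P.filter (fun p => p.1.2 = 0)).card
      = (P.filter (fun p => p.1.2 = 0 ∧ p.2.2 = 0)).card
      + (P.filter (fun p => p.1.2 = 0 ∧ p.2.2 = 1)).card := by
    rw [split1 (P.filter (fun p => p.1.2 = 0)) (fun p => p.2.2),
      Finset.filter_filter, Finset.filter_filter]
  have e2 : (P.filter (fun p => p.1.2 = 1)).card
      = (P.filter (fun p => p.1.2 = 1 ∧ p.2.2 = 0)).card
      + (P.filter (fun p => p.1.2 = 1 ∧ p.2.2 = 1)).card := by
    rw [split1 (P.filter (fun p => p.1.2 = 1)) (fun p => p.2.2),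
      Finset.filter_filter, Finset.filter_filter]
  rw [e0, e1, e2, count_same A 0, count_same A 1,
    count_diff A 0 1 (by omega), count_diff A 1 0 (by omega)]
  ring
end Count


lemma interior_bound (n s : ℕ) (h1 : 1 ≤ s) (h2 : s ≤ n - 1) : n - 1 ≤ s * (n - s) := by
  have h3 : n - s = (n - 1 - s) + 1 := by omega
  have h4 : s * (n - s) = s * (n - 1 - s) + s := by rw [h3]; ring
  have h5 : n - 1 - s ≤ s * (n - 1 - s) := Nat.le_mul_of_pos_left _ h1
  omega

lemma keyNum (n s0 s1 a b : ℕ) (hn : 3 ≤ n) (h0 : s0 ≤ n) (h1 : s1 ≤ n)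
    (ha : s0 ≤ s1 + a) (hb : s1 ≤ s0 + b) (hs1 : 1 ≤ s0 + s1) (hs2 : s0 + s1 ≤ 2 * n - 1) :
    n ≤ s0 * (n - s0) + s1 * (n - s1) + a + b ∧
    (s0 * (n - s0) + s1 * (n - s1) + a + b = n →
      ((s0 = 0 ∧ s1 = 1) ∨ (s1 = 0 ∧ s0 = 1) ∨ (s0 = n ∧ s1 = n - 1) ∨
        (s1 = n ∧ s0 = n - 1) ∨ (s0 = 0 ∧ s1 = n) ∨ (s1 = 0 ∧ s0 = n))) := by
  have hf0 : (s0 = 0 ∧ s0 * (n - s0) = 0) ∨ (s0 = n ∧ s0 * (n - s0) = 0) ∨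
      (1 ≤ s0 ∧ s0 ≤ n - 1 ∧ n - 1 ≤ s0 * (n - s0)) := by
    rcases Nat.eq_zero_or_pos s0 with h | h
    · exact Or.inl ⟨h, by simp [h]⟩
    rcases eq_or_lt_of_le h0 with h' | h'
    · exact Or.inr (Or.inl ⟨h', by simp [h']⟩)
    · exact Or.inr (Or.inr ⟨h, by omega, interior_bound n s0 h (by omega)⟩)
  have hf1 : (s1 = 0 ∧ s1 * (n - s1) = 0) ∨ (s1 = n ∧ s1 * (n - s1) = 0) ∨
      (1 ≤ s1 ∧ s1 ≤ n - 1 ∧ n - 1 ≤ s1 * (n - s1)) := by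
    rcases Nat.eq_zero_or_pos s1 with h | h
    · exact Or.inl ⟨h, by simp [h]⟩
    rcases eq_or_lt_of_le h1 with h' | h'
    · exact Or.inr (Or.inl ⟨h', by simp [h']⟩)
    · exact Or.inr (Or.inr ⟨h, by omega, interior_bound n s1 h (by omega)⟩)
  generalize s0 * (n - s0) = q0 at hf0 ⊢
  generalize s1 * (n - s1) = q1 at hf1 ⊢
  omega


section Prism
variable {n : ℕ}

def copy1 (n : ℕ) : Finset (Fin n × Fin 2) := Finset.univ.filter (fun v => v.2 = 1)

lemma mem_copy1 {v : Fin n × Fin 2} : v ∈ copy1 n ↔ v.2 = 1 := by simp [copy1]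

lemma fin2cases (j : Fin 2) : j = 0 ∨ j = 1 := by omega

lemma A_eq_of_sides (A : Finset (Fin n × Fin 2)) :
    A = ((side A 0).image (fun i => (i, (0 : Fin 2)))) ∪
      ((side A 1).image (fun i => (i, (1 : Fin 2)))) := by
  ext ⟨x, k⟩
  simp only [Finset.mem_union, Finset.mem_image, mem_side, Prod.mk.injEq]
  rcases fin2cases k with rfl | rfl
  · constructor
    · intro h; exact Or.inl ⟨x, h, rfl, rfl⟩
    · rintro (⟨a, ha, rfl, _⟩ | ⟨a, ha, rfl, h⟩)
      · exact ha
      · exact absurd h (by omega)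
  · constructor
    · intro h; exact Or.inr ⟨x, h, rfl, rfl⟩
    · rintro (⟨a, ha, rfl, h⟩ | ⟨a, ha, rfl, _⟩)
      · exact absurd h (by omega)
      · exact ha

lemma copy1_eq : copy1 n = Finset.univ.image (fun i => (i, (1 : Fin 2))) := by
  ext ⟨x, k⟩
  simp only [mem_copy1, Finset.mem_image, Finset.mem_univ, true_and, Prod.mk.injEq]
  constructor
  · rintro rfl; exact ⟨x, rfl, rfl⟩
  · rintro ⟨a, rfl, rfl⟩; rfl

lemma side_card_le (A : Finset (Fin n × Fin 2)) (j : Fin 2) : (side A j).card ≤ n := by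
  simpa using Finset.card_le_univ (side A j)

lemma side_compl (A : Finset (Fin n × Fin 2)) (j : Fin 2) : side Aᶜ j = (side A j)ᶜ := by
  ext i; simp [side]

lemma card_crossEdges_prism (A : Finset (Fin n × Fin 2)) :
    (crossEdges (PG n) A).card =
      (side A 0).card * (n - (side A 0).card) + (side A 1).card * (n - (side A 1).card)
      + ((side A 0) \ (side A 1)).card + ((side A 1) \ (side A 0)).card := by
  rw [card_crossEdges, card_crossPairs_prism]

lemma sides_facts (A : Finset (Fin n × Fin 2)) (hA : A.Nonempty) (hA' : Aᶜ.Nonempty) :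
    1 ≤ (side A 0).card + (side A 1).card ∧
    (side A 0).card + (side A 1).card ≤ 2 * n - 1 := by
  constructor
  · obtain ⟨⟨i, j⟩, h⟩ := hA
    rcases fin2cases j with rfl | rfl
    · have : 0 < (side A 0).card := Finset.card_pos.2 ⟨i, mem_side.2 h⟩
      omega
    · have : 0 < (side A 1).card := Finset.card_pos.2 ⟨i, mem_side.2 h⟩
      omega
  · obtain ⟨⟨i, j⟩, h⟩ := hA'
    rw [Finset.mem_compl] at h
    have h0 := side_card_le A 0
    have h1 := side_card_le A 1
    rcases fin2cases j with rfl | rfl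
    · have : (side A 0).card < n := by
        have := Finset.card_lt_univ_of_notMem (x := i) (s := side A 0)
          (fun hm => h (mem_side.1 hm))
        simpa using this
      omega
    · have : (side A 1).card < n := by
        have := Finset.card_lt_univ_of_notMem (x := i) (s := side A 1)
          (fun hm => h (mem_side.1 hm))
        simpa using this
      omega

lemma prism_key (hn : 3 ≤ n) (A : Finset (Fin n × Fin 2)) (hA : A.Nonempty)
    (hA' : Aᶜ.Nonempty) :
    n ≤ (crossEdges (PG n) A).card ∧
    ((crossEdges (PG n) A).card = n →
      (((side A 0).card = 0 ∧ (side A 1).card = 1) ∨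
       ((side A 1).card = 0 ∧ (side A 0).card = 1) ∨
       ((side A 0).card = n ∧ (side A 1).card = n - 1) ∨
       ((side A 1).card = n ∧ (side A 0).card = n - 1) ∨
       ((side A 0).card = 0 ∧ (side A 1).card = n) ∨
       ((side A 1).card = 0 ∧ (side A 0).card = n))) := by
  obtain ⟨hs1, hs2⟩ := sides_facts A hA hA'
  have ha := Finset.le_card_sdiff (side A 1) (side A 0)
  have hb := Finset.le_card_sdiff (side A 0) (side A 1)
  have := keyNum n (side A 0).card (side A 1).card ((side A 0) \ (side A 1)).card
    ((side A 1) \ (side A 0)).card hn (side_card_le A 0) (side_card_le A 1)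
    (by omega) (by omega) hs1 hs2
  rw [card_crossEdges_prism]
  exact this

lemma prism_connected (hn : 3 ≤ n) : (PG n).Connected := by
  have : Nonempty (Fin n) := ⟨⟨0, by omega⟩⟩
  rw [SimpleGraph.connected_boxProd]
  exact ⟨SimpleGraph.connected_top, SimpleGraph.connected_top⟩

lemma side_single_0 (i : Fin n) : side ({((i, (0 : Fin 2)))} : Finset _) 0 = {i} := by
  ext x; simp [mem_side, Prod.ext_iff]

lemma side_single_0' (i : Fin n) : side ({((i, (0 : Fin 2)))} : Finset _) 1 = ∅ := by
  ext x; simp [mem_side, Prod.ext_iff]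

lemma side_single_1 (i : Fin n) : side ({((i, (1 : Fin 2)))} : Finset _) 1 = {i} := by
  ext x; simp [mem_side, Prod.ext_iff]

lemma side_single_1' (i : Fin n) : side ({((i, (1 : Fin 2)))} : Finset _) 0 = ∅ := by
  ext x; simp [mem_side, Prod.ext_iff]

lemma side_copy1_0 : side (copy1 n) 0 = ∅ := by
  ext i; simp [mem_side, mem_copy1]

lemma side_copy1_1 : side (copy1 n) 1 = (Finset.univ : Finset (Fin n)) := by
  ext i; simp [mem_side, mem_copy1]

lemma card_match (hn : 3 ≤ n) : (crossEdges (PG n) (copy1 n)).card = n := by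
  rw [card_crossEdges_prism, side_copy1_0, side_copy1_1]
  simp

lemma card_star (hn : 3 ≤ n) (v : Fin n × Fin 2) :
    (crossEdges (PG n) {v}).card = n := by
  obtain ⟨i, j⟩ := v
  rcases fin2cases j with rfl | rfl
  · rw [card_crossEdges_prism, side_single_0, side_single_0']
    simp; omega
  · rw [card_crossEdges_prism, side_single_1, side_single_1']
    simp; omega

lemma compl_single_nonempty (hn : 3 ≤ n) (v : Fin n × Fin 2) :
    (({v} : Finset (Fin n × Fin 2))ᶜ).Nonempty := by
  have : 1 < Fintype.card (Fin n × Fin 2) := by simp; omega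
  obtain ⟨w, hw⟩ := Fintype.exists_ne_of_one_lt_card this v
  exact ⟨w, by simpa using hw⟩

lemma copy1_nonempty (hn : 3 ≤ n) : (copy1 n).Nonempty :=
  ⟨(⟨0, by omega⟩, 1), mem_copy1.2 rfl⟩

lemma copy1_compl_nonempty (hn : 3 ≤ n) : ((copy1 n)ᶜ).Nonempty :=
  ⟨(⟨0, by omega⟩, 0), by simp [mem_copy1]⟩

lemma edgeConn_prism (hn : 3 ≤ n) : edgeConn (PG n) = n := by
  have hv : (Fin n × Fin 2) := (⟨0, by omega⟩, 0)
  apply edgeConn_eq_of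
  · exact ⟨crossEdges (PG n) {hv}, card_star hn hv,
      isEdgeCut_crossEdges (prism_connected hn) ⟨hv, Finset.mem_singleton_self hv⟩
        (compl_single_nonempty hn hv)⟩
  · intro A hA hA'
    exact (prism_key hn A hA hA').1

lemma prism_mincut_iff (hn : 3 ≤ n) (X : Finset (Sym2 (Fin n × Fin 2))) :
    IsMincut (PG n) X ↔
      X = crossEdges (PG n) (copy1 n) ∨ ∃ v, X = crossEdges (PG n) {v} := by
  rw [isMincut_iff_crossEdges (prism_connected hn)
    (fun A hA hA' => by rw [edgeConn_prism hn]; exact (prism_key hn A hA hA').1)]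
  constructor
  · rintro ⟨A, hA, hA', rfl, hcard⟩
    rw [edgeConn_prism hn] at hcard
    rcases (prism_key hn A hA hA').2 hcard with h | h | h | h | h | h
    · -- A = {(i,1)}
      obtain ⟨i, hi⟩ := Finset.card_eq_one.1 h.2
      have h0 : side A 0 = ∅ := Finset.card_eq_zero.1 h.1
      have : A = {(i, 1)} := by
        rw [A_eq_of_sides A, h0, hi]; simp
      exact Or.inr ⟨(i, 1), by rw [this]⟩
    · obtain ⟨i, hi⟩ := Finset.card_eq_one.1 h.2
      have h0 : side A 1 = ∅ := Finset.card_eq_zero.1 h.1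
      have : A = {(i, 0)} := by
        rw [A_eq_of_sides A, h0, hi]; simp
      exact Or.inr ⟨(i, 0), by rw [this]⟩
    · -- Aᶜ = {(i,1)}
      have h0 : side Aᶜ 0 = ∅ := by
        rw [side_compl, Finset.eq_univ_of_card (side A 0)
          (by rw [Fintype.card_fin]; exact h.1), Finset.compl_univ]
      have h1 : (side Aᶜ 1).card = 1 := by
        rw [side_compl, Finset.card_compl]
        simp [h.2]; omega
      obtain ⟨i, hi⟩ := Finset.card_eq_one.1 h1
      have hAc : Aᶜ = {(i, 1)} := by
        rw [A_eq_of_sides Aᶜ, h0, hi]; simp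
      refine Or.inr ⟨(i, 1), by rw [← crossEdges_compl (PG n) A, hAc]⟩
    · have h0 : side Aᶜ 1 = ∅ := by
        rw [side_compl, Finset.eq_univ_of_card (side A 1)
          (by rw [Fintype.card_fin]; exact h.1), Finset.compl_univ]
      have h1 : (side Aᶜ 0).card = 1 := by
        rw [side_compl, Finset.card_compl]
        simp [h.2]; omega
      obtain ⟨i, hi⟩ := Finset.card_eq_one.1 h1
      have hAc : Aᶜ = {(i, 0)} := by
        rw [A_eq_of_sides Aᶜ, h0, hi]; simp
      refine Or.inr ⟨(i, 0), by rw [← crossEdges_compl (PG n) A, hAc]⟩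
    · -- A = copy1
      have h0 : side A 0 = ∅ := Finset.card_eq_zero.1 h.1
      have h1 : side A 1 = Finset.univ := Finset.eq_univ_of_card (side A 1)
        (by rw [Fintype.card_fin]; exact h.2)
      have : A = copy1 n := by
        rw [A_eq_of_sides A, h0, h1, copy1_eq]; simp
      exact Or.inl (by rw [this])
    · -- Aᶜ = copy1
      have h0 : side Aᶜ 0 = ∅ := by
        rw [side_compl, Finset.eq_univ_of_card (side A 0)
          (by rw [Fintype.card_fin]; exact h.2), Finset.compl_univ]
      have h1 : side Aᶜ 1 = Finset.univ := by
        rw [side_compl, Finset.card_eq_zero.1 h.1, Finset.compl_empty]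
      have hAc : Aᶜ = copy1 n := by
        rw [A_eq_of_sides Aᶜ, h0, h1, copy1_eq]; simp
      exact Or.inl (by rw [← crossEdges_compl (PG n) A, hAc])
  · rintro (rfl | ⟨v, rfl⟩)
    · exact ⟨copy1 n, copy1_nonempty hn, copy1_compl_nonempty hn, rfl,
        (card_match hn).trans (edgeConn_prism hn).symm⟩
    · exact ⟨{v}, ⟨v, Finset.mem_singleton_self v⟩, compl_single_nonempty hn v, rfl,
        (card_star hn v).trans (edgeConn_prism hn).symm⟩

end Prism

section PrismIso
variable {n : ℕ}

lemma mem_matchF {e : Sym2 (Fin n × Fin 2)} :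
    e ∈ crossEdges (PG n) (copy1 n) ↔ ∃ i : Fin n, e = s((i, (0 : Fin 2)), (i, 1)) := by
  rw [mem_crossEdges]
  constructor
  · rintro ⟨a, ha, b, hb, hadj, rfl⟩
    have ha' : a.2 = 1 := mem_copy1.1 ha
    have hb' : b.2 = 0 := by
      have : ¬ b.2 = 1 := fun h => hb (mem_copy1.2 h)
      omega
    rw [prism_adj] at hadj
    have heq : a.1 = b.1 := by
      rcases hadj with ⟨_, h⟩ | ⟨_, h⟩
      · rw [ha', hb'] at h; exact absurd h (by simp)
      · exact h
    refine ⟨a.1, ?_⟩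
    rw [show a = (a.1, (1 : Fin 2)) from Prod.ext rfl ha',
      show b = (a.1, (0 : Fin 2)) from Prod.ext heq.symm hb']
    exact Sym2.eq_swap.symm
  · rintro ⟨i, rfl⟩
    refine ⟨(i, 1), mem_copy1.2 rfl, (i, 0), ?_, ?_, Sym2.eq_swap.symm⟩
    · intro h; exact absurd (mem_copy1.1 h) (by simp)
    · rw [prism_adj]; exact Or.inr ⟨by simp, rfl⟩

lemma match_inter_star (v : Fin n × Fin 2) :
    (crossEdges (PG n) (copy1 n) ∩ crossEdges (PG n) {v}).Nonempty := by
  refine ⟨s((v.1, (0 : Fin 2)), (v.1, 1)), Finset.mem_inter.2 ⟨mem_matchF.2 ⟨v.1, rfl⟩, ?_⟩⟩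
  rcases fin2cases v.2 with h | h
  · refine mem_crossEdges.2 ⟨(v.1, 0), ?_, (v.1, 1), ?_, ?_, rfl⟩
    · simp [show ((v.1, (0:Fin 2))) = v from Prod.ext rfl h.symm]
    · simp only [Finset.mem_singleton]
      intro hc
      rw [show v = (v.1, (0:Fin 2)) from Prod.ext rfl h] at hc
      exact absurd (Prod.ext_iff.1 hc).2 (by simp)
    · rw [prism_adj]; exact Or.inr ⟨by simp, rfl⟩
  · refine mem_crossEdges.2 ⟨(v.1, 1), ?_, (v.1, 0), ?_, ?_, Sym2.eq_swap.symm⟩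
    · simp [show ((v.1, (1:Fin 2))) = v from Prod.ext rfl h.symm]
    · simp only [Finset.mem_singleton]
      intro hc
      rw [show v = (v.1, (1:Fin 2)) from Prod.ext rfl h] at hc
      exact absurd (Prod.ext_iff.1 hc).2 (by simp)
    · rw [prism_adj]; exact Or.inr ⟨by simp, rfl⟩

lemma match_ne_star (hn : 3 ≤ n) (v : Fin n × Fin 2) :
    crossEdges (PG n) (copy1 n) ≠ crossEdges (PG n) {v} := by
  intro h
  have h1 : 1 < Fintype.card (Fin n) := by simp; omega
  obtain ⟨i, hi⟩ := Fintype.exists_ne_of_one_lt_card h1 v.1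
  have hm : s((i, (0 : Fin 2)), (i, 1)) ∈ crossEdges (PG n) {v} :=
    h ▸ mem_matchF.2 ⟨i, rfl⟩
  rw [mem_crossEdges] at hm
  obtain ⟨a, ha, b, hb, hadj, he⟩ := hm
  rw [Finset.mem_singleton] at ha
  subst ha
  rw [Sym2.eq_iff] at he
  rcases he with ⟨ha', -⟩ | ⟨-, ha'⟩
  · exact hi (congrArg Prod.fst ha')
  · exact hi (congrArg Prod.fst ha')

lemma prism_two_nbrs (hn : 3 ≤ n) (u : Fin n × Fin 2) :
    ∃ x y, (PG n).Adj u x ∧ (PG n).Adj u y ∧ x ≠ y := by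
  obtain ⟨a, j⟩ := u
  have h1 : 1 < Fintype.card (Fin n) := by simp; omega
  obtain ⟨i, hi⟩ := Fintype.exists_ne_of_one_lt_card h1 a
  rcases fin2cases j with rfl | rfl
  · refine ⟨(a, 1), (i, 0), ?_, ?_, ?_⟩
    · rw [prism_adj]; exact Or.inr ⟨by simp, rfl⟩
    · rw [prism_adj]; exact Or.inl ⟨fun hc => hi ((show a = i from hc)).symm, rfl⟩
    · exact fun hc => absurd (congrArg Prod.snd hc) (by simp)
  · refine ⟨(a, 0), (i, 1), ?_, ?_, ?_⟩
    · rw [prism_adj]; exact Or.inr ⟨by simp, rfl⟩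
    · rw [prism_adj]; exact Or.inl ⟨fun hc => hi ((show a = i from hc)).symm, rfl⟩
    · exact fun hc => absurd (congrArg Prod.snd hc) (by simp)

noncomputable def prismF (hn : 3 ≤ n) :
    Unit ⊕ (Fin n × Fin 2) → {X : Finset (Sym2 (Fin n × Fin 2)) // IsMincut (PG n) X} :=
  fun x => match x with
  | Sum.inl _ => ⟨crossEdges (PG n) (copy1 n), (prism_mincut_iff hn _).2 (Or.inl rfl)⟩
  | Sum.inr v => ⟨crossEdges (PG n) {v}, (prism_mincut_iff hn _).2 (Or.inr ⟨v, rfl⟩)⟩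

lemma prismF_bij (hn : 3 ≤ n) : Function.Bijective (prismF hn) := by
  constructor
  · intro x y h
    rw [Subtype.ext_iff] at h
    rcases x with u | u <;> rcases y with v | v
    · exact congrArg Sum.inl (Subsingleton.elim u v)
    · exact absurd h (match_ne_star hn v)
    · exact absurd h.symm (match_ne_star hn u)
    · exact congrArg Sum.inr (crossEdges_singleton_injective (prism_two_nbrs hn u) h)
  · rintro ⟨X, hX⟩
    rcases (prism_mincut_iff hn X).1 hX with h | ⟨v, h⟩
    · exact ⟨Sum.inl (), Subtype.ext h.symm⟩
    · exact ⟨Sum.inr v, Subtype.ext h.symm⟩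

lemma mincutGraph_adj' {V : Type*} [DecidableEq V] {G : SimpleGraph V}
    {X Y : {X : Finset (Sym2 V) // IsMincut G X}} :
    (mincutGraph G).Adj X Y ↔ X.1 ≠ Y.1 ∧ (X.1 ∩ Y.1).Nonempty := by
  rw [mincutGraph, SimpleGraph.fromRel_adj]
  constructor
  · rintro ⟨h1, h2 | h2⟩
    · exact ⟨fun hc => h1 (Subtype.ext hc), h2⟩
    · exact ⟨fun hc => h1 (Subtype.ext hc), Finset.inter_comm Y.1 X.1 ▸ h2⟩
  · rintro ⟨h1, h2⟩
    exact ⟨fun hc => h1 (congrArg Subtype.val hc), Or.inl h2⟩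

lemma coneGraph_adj_inr_inr {W : Type*} {H : SimpleGraph W} {x y : W} :
    (coneGraph H).Adj (Sum.inr x) (Sum.inr y) ↔ H.Adj x y := by
  rw [coneGraph, SimpleGraph.fromRel_adj]
  constructor
  · rintro ⟨h1, h2 | h2⟩
    · exact h2
    · exact h2.symm
  · intro h
    exact ⟨fun hc => h.ne (Sum.inr.inj hc), Or.inl h⟩

lemma coneGraph_adj_inl_inr {W : Type*} {H : SimpleGraph W} {x : W} {u : Unit} :
    (coneGraph H).Adj (Sum.inl u) (Sum.inr x) := by
  rw [coneGraph, SimpleGraph.fromRel_adj]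
  exact ⟨Sum.inl_ne_inr, Or.inl trivial⟩

noncomputable def prismIso1 (hn : 3 ≤ n) : coneGraph (PG n) ≃g mincutGraph (PG n) := by
  refine ⟨Equiv.ofBijective (prismF hn) (prismF_bij hn), ?_⟩
  intro a b
  rcases a with u | u <;> rcases b with v | v
  · have hab : (Sum.inl u : Unit ⊕ (Fin n × Fin 2)) = Sum.inl v :=
      congrArg Sum.inl (Subsingleton.elim u v)
    rw [hab]
    exact ⟨fun h => absurd h (mincutGraph (PG n)).irrefl,
      fun h => absurd h (coneGraph (PG n)).irrefl⟩
  · rw [mincutGraph_adj']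
    constructor
    · intro _; exact coneGraph_adj_inl_inr
    · intro _
      exact ⟨match_ne_star hn v, match_inter_star v⟩
  · rw [mincutGraph_adj']
    constructor
    · intro _
      exact (coneGraph_adj_inl_inr (H := PG n) (x := u) (u := v)).symm
    · intro _
      refine ⟨fun hc => match_ne_star hn u hc.symm, ?_⟩
      rw [Finset.inter_comm]
      exact match_inter_star u
  · rw [mincutGraph_adj', coneGraph_adj_inr_inr]
    by_cases huv : u = v
    · subst huv
      constructor
      · rintro ⟨h1, _⟩; exact absurd rfl h1
      · intro h; exact absurd h (PG n).irrefl
    · constructor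
      · rintro ⟨_, h2⟩
        exact (crossEdges_singleton_inter huv).1 h2
      · intro h
        exact ⟨fun hc => huv (crossEdges_singleton_injective (prism_two_nbrs hn u) hc),
          (crossEdges_singleton_inter huv).2 h⟩

end PrismIso

section Cone
variable {n : ℕ}

lemma coneGraph_adj_inr_inl {W : Type*} {H : SimpleGraph W} {x : W} {u : Unit} :
    (coneGraph H).Adj (Sum.inr x) (Sum.inl u) := by
  rw [coneGraph, SimpleGraph.fromRel_adj]
  exact ⟨Sum.inr_ne_inl, Or.inr trivial⟩

lemma cone_connected {W : Type*} (H : SimpleGraph W) : (coneGraph H).Connected := by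
  rw [SimpleGraph.connected_iff]
  refine ⟨fun x y => ?_, ⟨Sum.inl ()⟩⟩
  have hx : ∀ z : Unit ⊕ W, (coneGraph H).Reachable (Sum.inl ()) z := by
    intro z
    rcases z with u | w
    · rw [show (Sum.inl u : Unit ⊕ W) = Sum.inl () from congrArg _ (Subsingleton.elim _ _)]
    · exact (coneGraph_adj_inl_inr).reachable
  exact (hx x).symm.trans (hx y)

abbrev CG (n : ℕ) : SimpleGraph (Unit ⊕ (Fin n × Fin 2)) := coneGraph (PG n)

def coneT (A : Finset (Unit ⊕ (Fin n × Fin 2))) : Finset (Fin n × Fin 2) :=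
  Finset.univ.filter (fun v => Sum.inr v ∈ A)

lemma mem_coneT {A : Finset (Unit ⊕ (Fin n × Fin 2))} {v : Fin n × Fin 2} :
    v ∈ coneT A ↔ Sum.inr v ∈ A := by simp [coneT]

lemma crossPairs_card_compl {V : Type*} [Fintype V] [DecidableEq V]
    (G : SimpleGraph V) (A : Finset V) :
    (crossPairs G A).card = (crossPairs G Aᶜ).card := by
  rw [← card_crossEdges, ← card_crossEdges, crossEdges_compl]

lemma crossPairs_empty {V : Type*} [Fintype V] [DecidableEq V] (G : SimpleGraph V) :
    crossPairs G (∅ : Finset V) = ∅ := by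
  ext p; simp [mem_crossPairs]

lemma cone_count (A : Finset (Unit ⊕ (Fin n × Fin 2))) (h : Sum.inl () ∈ A) :
    (crossPairs (CG n) A).card = ((coneT A)ᶜ).card + (crossPairs (PG n) (coneT A)).card := by
  classical
  have hdecomp : crossPairs (CG n) A =
      ((coneT A)ᶜ.image (fun v => ((Sum.inl () : Unit ⊕ (Fin n × Fin 2)), Sum.inr v))) ∪
      ((crossPairs (PG n) (coneT A)).image (fun p => (Sum.inr p.1, Sum.inr p.2))) := by
    ext ⟨x, y⟩
    rw [mem_crossPairs, Finset.mem_union]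
    rcases x with ux | vx <;> rcases y with uy | vy
    · simp only [Finset.mem_image, Prod.mk.injEq]
      constructor
      · rintro ⟨_, _, hadj⟩
        rw [show (Sum.inl uy : Unit ⊕ (Fin n × Fin 2)) = Sum.inl ux from
          congrArg _ (Subsingleton.elim _ _)] at hadj
        exact absurd hadj (CG n).irrefl
      · rintro (⟨a, _, _, hc⟩ | ⟨p, _, hc, _⟩) <;> simp at hc
    · constructor
      · rintro ⟨_, hy, _⟩
        exact Or.inl (Finset.mem_image.2 ⟨vy, Finset.mem_compl.2 (fun hm => hy (mem_coneT.1 hm)),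
          by rw [show (Sum.inl () : Unit ⊕ (Fin n × Fin 2)) = Sum.inl ux from
            congrArg _ (Subsingleton.elim _ _)]⟩)
      · rintro (hm | hm) <;> rw [Finset.mem_image] at hm
        · obtain ⟨a, ha, heq⟩ := hm
          obtain ⟨h1, h2⟩ := Prod.mk.injEq .. ▸ heq
          refine ⟨by rw [show Sum.inl ux = (Sum.inl () : Unit ⊕ (Fin n × Fin 2)) from
              congrArg _ (Subsingleton.elim _ _)]; exact h,
            fun hm2 => (Finset.mem_compl.1 ha) (mem_coneT.2 (by rw [h2]; exact hm2)), ?_⟩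
          rw [← h2]
          exact coneGraph_adj_inl_inr
        · obtain ⟨p, _, heq⟩ := hm
          exact absurd (congrArg Prod.fst heq) (by simp)
    · constructor
      · rintro ⟨_, hy, _⟩
        exact absurd (by rw [show (Sum.inl uy : Unit ⊕ (Fin n × Fin 2)) = Sum.inl () from
          congrArg _ (Subsingleton.elim _ _)]; exact h) hy
      · rintro (hm | hm) <;> rw [Finset.mem_image] at hm
        · obtain ⟨a, _, heq⟩ := hm
          exact absurd (congrArg Prod.fst heq) (by simp)
        · obtain ⟨p, _, heq⟩ := hm
          exact absurd (congrArg Prod.snd heq) (by simp)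
    · constructor
      · rintro ⟨hx, hy, hadj⟩
        refine Or.inr (Finset.mem_image.2 ⟨(vx, vy), ?_, rfl⟩)
        rw [mem_crossPairs]
        exact ⟨mem_coneT.2 hx, fun hm => hy (mem_coneT.1 hm), coneGraph_adj_inr_inr.1 hadj⟩
      · rintro (hm | hm) <;> rw [Finset.mem_image] at hm
        · obtain ⟨a, _, heq⟩ := hm
          exact absurd (congrArg Prod.fst heq) (by simp)
        · obtain ⟨p, hp, heq⟩ := hm
          rw [mem_crossPairs] at hp
          obtain ⟨h1, h2⟩ := Prod.mk.injEq .. ▸ heq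
          have e1 : Sum.inr p.1 = (Sum.inr vx : Unit ⊕ (Fin n × Fin 2)) := congrArg Prod.fst heq
          have e2 : Sum.inr p.2 = (Sum.inr vy : Unit ⊕ (Fin n × Fin 2)) := congrArg Prod.snd heq
          rw [Sum.inr.injEq] at e1 e2
          subst e1; subst e2
          exact ⟨mem_coneT.1 hp.1, fun hm => hp.2.1 (mem_coneT.2 hm),
            coneGraph_adj_inr_inr.2 hp.2.2⟩
  rw [hdecomp, Finset.card_union_of_disjoint, Finset.card_image_of_injective,
    Finset.card_image_of_injective]
  · intro p q hpq
    rw [Prod.ext_iff] at hpq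
    exact Prod.ext (Sum.inr.inj hpq.1) (Sum.inr.inj hpq.2)
  · intro a b hab
    exact Sum.inr.inj (congrArg Prod.snd hab)
  · rw [Finset.disjoint_left]
    rintro p hp hq
    rw [Finset.mem_image] at hp hq
    obtain ⟨a, _, rfl⟩ := hp
    obtain ⟨q, _, heq⟩ := hq
    exact absurd (congrArg Prod.fst heq) (by simp)

lemma coneT_compl (A : Finset (Unit ⊕ (Fin n × Fin 2))) : coneT Aᶜ = (coneT A)ᶜ := by
  ext v; simp [mem_coneT]

lemma cone_star_card (hn : 3 ≤ n) (v : Fin n × Fin 2) :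
    (crossEdges (CG n) {Sum.inr v}).card = n + 1 := by
  rw [card_crossEdges, crossPairs_card_compl]
  have hinl : Sum.inl () ∈ ({Sum.inr v} : Finset (Unit ⊕ (Fin n × Fin 2)))ᶜ := by simp
  rw [cone_count _ hinl]
  have hT : coneT ({Sum.inr v} : Finset (Unit ⊕ (Fin n × Fin 2)))ᶜ = {v}ᶜ := by
    rw [coneT_compl]
    congr 1
    ext w; simp [mem_coneT]
  rw [hT, compl_compl, Finset.card_singleton, crossPairs_card_compl, compl_compl,
    ← card_crossEdges, card_star hn]
  omega

lemma cone_lower (hn : 3 ≤ n) (A : Finset (Unit ⊕ (Fin n × Fin 2)))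
    (hA : A.Nonempty) (hA' : Aᶜ.Nonempty) (h : Sum.inl () ∈ A) :
    n + 1 ≤ (crossEdges (CG n) A).card ∧
    ((crossEdges (CG n) A).card = n + 1 → ∃ w, Aᶜ = {Sum.inr w}) := by
  rw [card_crossEdges, cone_count A h]
  have hTc : ((coneT A)ᶜ).Nonempty := by
    obtain ⟨x, hx⟩ := hA'
    rw [Finset.mem_compl] at hx
    rcases x with u | w
    · exact absurd (by rw [show (Sum.inl u : Unit ⊕ (Fin n × Fin 2)) = Sum.inl () from
        congrArg _ (Subsingleton.elim _ _)]; exact h) hx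
    · exact ⟨w, Finset.mem_compl.2 (fun hm => hx (mem_coneT.1 hm))⟩
  rcases Finset.eq_empty_or_nonempty (coneT A) with hT | hT
  · rw [hT, crossPairs_empty]
    have : ((∅ : Finset (Fin n × Fin 2))ᶜ).card = 2 * n := by
      rw [Finset.compl_empty, Finset.card_univ]
      simp; omega
    rw [this]
    constructor
    · omega
    · intro hc; omega
  · have hcross : n ≤ (crossPairs (PG n) (coneT A)).card := by
      rw [← card_crossEdges]
      exact (prism_key hn (coneT A) hT hTc).1
    have hc1 : 1 ≤ ((coneT A)ᶜ).card := Finset.card_pos.2 hTc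
    refine ⟨by omega, fun hc => ?_⟩
    have : ((coneT A)ᶜ).card = 1 := by omega
    obtain ⟨w, hw⟩ := Finset.card_eq_one.1 this
    refine ⟨w, ?_⟩
    ext x
    rw [Finset.mem_compl, Finset.mem_singleton]
    rcases x with u | z
    · constructor
      · intro hx
        exact absurd (by rw [show (Sum.inl u : Unit ⊕ (Fin n × Fin 2)) = Sum.inl () from
          congrArg _ (Subsingleton.elim _ _)]; exact h) hx
      · intro hx; exact absurd hx (by simp)
    · constructor
      · intro hx
        have : z ∈ (coneT A)ᶜ := Finset.mem_compl.2 (fun hm => hx (mem_coneT.1 hm))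
        rw [hw, Finset.mem_singleton] at this
        rw [this]
      · intro hx
        rw [Sum.inr.injEq] at hx
        subst hx
        intro hm
        have : z ∈ coneT A := mem_coneT.2 hm
        have h2 : z ∈ (coneT A)ᶜ := by rw [hw]; exact Finset.mem_singleton_self z
        exact (Finset.mem_compl.1 h2) this

lemma cone_single_compl_nonempty (v : Fin n × Fin 2) :
    (({Sum.inr v} : Finset (Unit ⊕ (Fin n × Fin 2)))ᶜ).Nonempty :=
  ⟨Sum.inl (), by simp⟩

lemma cone_lower' (hn : 3 ≤ n) (A : Finset (Unit ⊕ (Fin n × Fin 2)))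
    (hA : A.Nonempty) (hA' : Aᶜ.Nonempty) :
    n + 1 ≤ (crossEdges (CG n) A).card := by
  by_cases h : Sum.inl () ∈ A
  · exact (cone_lower hn A hA hA' h).1
  · rw [← crossEdges_compl]
    refine (cone_lower hn Aᶜ hA' (by rwa [compl_compl]) (Finset.mem_compl.2 h)).1

lemma edgeConn_cone (hn : 3 ≤ n) : edgeConn (CG n) = n + 1 := by
  have v0 : Fin n × Fin 2 := (⟨0, by omega⟩, 0)
  apply edgeConn_eq_of
  · exact ⟨crossEdges (CG n) {Sum.inr v0}, cone_star_card hn v0,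
      isEdgeCut_crossEdges (cone_connected (PG n)) ⟨Sum.inr v0, Finset.mem_singleton_self _⟩
        (cone_single_compl_nonempty v0)⟩
  · exact cone_lower' hn

lemma cone_mincut_iff (hn : 3 ≤ n) (X : Finset (Sym2 (Unit ⊕ (Fin n × Fin 2)))) :
    IsMincut (CG n) X ↔ ∃ v, X = crossEdges (CG n) {Sum.inr v} := by
  rw [isMincut_iff_crossEdges (cone_connected (PG n))
    (fun A hA hA' => by rw [edgeConn_cone hn]; exact cone_lower' hn A hA hA')]
  constructor
  · rintro ⟨A, hA, hA', rfl, hcard⟩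
    rw [edgeConn_cone hn] at hcard
    by_cases h : Sum.inl () ∈ A
    · obtain ⟨w, hw⟩ := (cone_lower hn A hA hA' h).2 hcard
      exact ⟨w, by rw [← crossEdges_compl (CG n) A, hw]⟩
    · have hcard' : (crossEdges (CG n) Aᶜ).card = n + 1 := by
        rwa [crossEdges_compl]
      obtain ⟨w, hw⟩ := (cone_lower hn Aᶜ hA' (by rwa [compl_compl])
        (Finset.mem_compl.2 h)).2 hcard'
      rw [compl_compl] at hw
      exact ⟨w, by rw [hw]⟩
  · rintro ⟨v, rfl⟩
    exact ⟨{Sum.inr v}, ⟨Sum.inr v, Finset.mem_singleton_self _⟩,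
      cone_single_compl_nonempty v, rfl, by rw [cone_star_card hn v, edgeConn_cone hn]⟩

lemma cone_two_nbrs (hn : 3 ≤ n) (v : Fin n × Fin 2) :
    ∃ x y, (CG n).Adj (Sum.inr v) x ∧ (CG n).Adj (Sum.inr v) y ∧ x ≠ y := by
  obtain ⟨z, _, hz, _, _⟩ := prism_two_nbrs hn v
  exact ⟨Sum.inl (), Sum.inr z, coneGraph_adj_inr_inl, coneGraph_adj_inr_inr.2 hz,
    by simp⟩

noncomputable def coneF (hn : 3 ≤ n) :
    (Fin n × Fin 2) → {X : Finset (Sym2 (Unit ⊕ (Fin n × Fin 2))) // IsMincut (CG n) X} :=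
  fun v => ⟨crossEdges (CG n) {Sum.inr v}, (cone_mincut_iff hn _).2 ⟨v, rfl⟩⟩

lemma coneF_bij (hn : 3 ≤ n) : Function.Bijective (coneF hn) := by
  constructor
  · intro u v h
    rw [Subtype.ext_iff] at h
    exact Sum.inr.inj (crossEdges_singleton_injective (cone_two_nbrs hn u) h)
  · rintro ⟨X, hX⟩
    obtain ⟨v, hv⟩ := (cone_mincut_iff hn X).1 hX
    exact ⟨v, Subtype.ext hv.symm⟩

noncomputable def coneIso2 (hn : 3 ≤ n) : PG n ≃g mincutGraph (CG n) := by
  refine ⟨Equiv.ofBijective (coneF hn) (coneF_bij hn), ?_⟩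
  intro u v
  rw [mincutGraph_adj']
  by_cases huv : u = v
  · subst huv
    constructor
    · rintro ⟨h1, _⟩; exact absurd rfl h1
    · intro h; exact absurd h (PG n).irrefl
  · have hne : (Sum.inr u : Unit ⊕ (Fin n × Fin 2)) ≠ Sum.inr v :=
      fun hc => huv (Sum.inr.inj hc)
    constructor
    · rintro ⟨_, h2⟩
      exact coneGraph_adj_inr_inr.1 ((crossEdges_singleton_inter hne).1 h2)
    · intro h
      refine ⟨fun hc => huv (Sum.inr.inj
        (crossEdges_singleton_injective (cone_two_nbrs hn u) hc)), ?_⟩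
      exact (crossEdges_singleton_inter hne).2 (coneGraph_adj_inr_inr.2 h)

end Cone

section Invariance
variable {V W : Type*} [DecidableEq V] [DecidableEq W] {G : SimpleGraph V} {H : SimpleGraph W}

def sym2Congr (e : V ≃ W) : Sym2 V ≃ Sym2 W where
  toFun := Sym2.map e
  invFun := Sym2.map e.symm
  left_inv x := by induction x using Sym2.ind with | _ a b => simp
  right_inv x := by induction x using Sym2.ind with | _ a b => simp

lemma sym2Congr_apply (e : V ≃ W) (a b : V) : sym2Congr e s(a, b) = s(e a, e b) := rfl

def edgeMap (e : V ≃ W) (X : Finset (Sym2 V)) : Finset (Sym2 W) :=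
  Equiv.finsetCongr (sym2Congr e) X

lemma mem_edgeMap {e : V ≃ W} {X : Finset (Sym2 V)} {y : Sym2 W} :
    y ∈ edgeMap e X ↔ (sym2Congr e).symm y ∈ X := by
  rw [edgeMap, Equiv.finsetCongr_apply, Finset.mem_map_equiv]

lemma mem_edgeMap' {e : V ≃ W} {X : Finset (Sym2 V)} {x : Sym2 V} :
    sym2Congr e x ∈ edgeMap e X ↔ x ∈ X := by
  rw [mem_edgeMap, Equiv.symm_apply_apply]

lemma card_edgeMap (e : V ≃ W) (X : Finset (Sym2 V)) : (edgeMap e X).card = X.card := by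
  rw [edgeMap, Equiv.finsetCongr_apply, Finset.card_map]

def deleteIso (e : G ≃g H) (X : Finset (Sym2 V)) :
    G.deleteEdges ↑X ≃g H.deleteEdges ↑(edgeMap e.toEquiv X) := by
  refine ⟨e.toEquiv, ?_⟩
  intro a b
  rw [SimpleGraph.deleteEdges_adj, SimpleGraph.deleteEdges_adj]
  have hmem : s((e.toEquiv) a, (e.toEquiv) b) ∈ ↑(edgeMap e.toEquiv X) ↔
      s(a, b) ∈ (↑X : Set (Sym2 V)) := by
    rw [show s((e.toEquiv) a, (e.toEquiv) b) = sym2Congr e.toEquiv s(a, b) from rfl]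
    exact mem_edgeMap'
  constructor
  · rintro ⟨h1, h2⟩
    exact ⟨e.map_rel_iff.1 h1, fun hm => h2 (hmem.2 hm)⟩
  · rintro ⟨h1, h2⟩
    exact ⟨e.map_rel_iff.2 h1, fun hm => h2 (hmem.1 hm)⟩

lemma isEdgeCut_map (e : G ≃g H) (X : Finset (Sym2 V)) :
    IsEdgeCut H (edgeMap e.toEquiv X) ↔ IsEdgeCut G X := by
  unfold IsEdgeCut
  rw [← e.connected_iff, ← (deleteIso e X).connected_iff]
  refine and_congr_right (fun _ => and_congr_left (fun _ => ?_))
  constructor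
  · intro hsub x hx
    induction x using Sym2.ind with | _ a b =>
    have hm : sym2Congr e.toEquiv s(a, b) ∈ edgeMap e.toEquiv X :=
      mem_edgeMap'.2 (Finset.mem_coe.1 hx)
    have := hsub (Finset.mem_coe.2 hm)
    rw [sym2Congr_apply] at this
    rw [SimpleGraph.mem_edgeSet] at this ⊢
    exact e.map_rel_iff.1 this
  · intro hsub y hy
    rw [Finset.mem_coe, mem_edgeMap] at hy
    have := hsub (Finset.mem_coe.2 hy)
    induction y using Sym2.ind with | _ a b =>
    have h2 : (sym2Congr e.toEquiv).symm s(a, b) = s(e.toEquiv.symm a, e.toEquiv.symm b) := rfl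
    rw [h2, SimpleGraph.mem_edgeSet] at this
    rw [SimpleGraph.mem_edgeSet]
    exact e.symm.map_rel_iff.1 this

lemma edgeConn_map (e : G ≃g H) : edgeConn G = edgeConn H := by
  unfold edgeConn
  congr 1
  ext k
  constructor
  · rintro ⟨X, rfl, hX⟩
    exact ⟨edgeMap e.toEquiv X, card_edgeMap e.toEquiv X, (isEdgeCut_map e X).2 hX⟩
  · rintro ⟨Y, rfl, hY⟩
    refine ⟨edgeMap e.symm.toEquiv Y, card_edgeMap _ Y, (isEdgeCut_map e.symm Y).2 hY⟩

lemma isMincut_map (e : G ≃g H) (X : Finset (Sym2 V)) :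
    IsMincut H (edgeMap e.toEquiv X) ↔ IsMincut G X := by
  unfold IsMincut
  rw [isEdgeCut_map, card_edgeMap, edgeConn_map e]

noncomputable def mincutGraphIso (e : G ≃g H) : mincutGraph G ≃g mincutGraph H := by
  refine ⟨Equiv.subtypeEquiv (Equiv.finsetCongr (sym2Congr e.toEquiv))
    (fun X => (isMincut_map e X).symm), ?_⟩
  intro X Y
  rw [mincutGraph_adj', mincutGraph_adj']
  have hval : ∀ Z : {X : Finset (Sym2 V) // IsMincut G X},
      ((Equiv.subtypeEquiv (Equiv.finsetCongr (sym2Congr e.toEquiv))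
        (fun X => (isMincut_map e X).symm)) Z).1 = edgeMap e.toEquiv Z.1 := fun _ => rfl
  rw [hval, hval]
  constructor
  · rintro ⟨h1, h2⟩
    refine ⟨fun hc => h1 (by rw [hc]), ?_⟩
    obtain ⟨y, hy⟩ := h2
    rw [Finset.mem_inter, mem_edgeMap, mem_edgeMap] at hy
    exact ⟨_, Finset.mem_inter.2 hy⟩
  · rintro ⟨h1, h2⟩
    refine ⟨fun hc => h1 ?_, ?_⟩
    · have : ∀ x, x ∈ X.1 ↔ x ∈ Y.1 := by
        intro x
        rw [← mem_edgeMap' (e := e.toEquiv) (X := X.1),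
          ← mem_edgeMap' (e := e.toEquiv) (X := Y.1), hc]
      exact Finset.ext this
    · obtain ⟨x, hx⟩ := h2
      rw [Finset.mem_inter] at hx
      exact ⟨sym2Congr e.toEquiv x,
        Finset.mem_inter.2 ⟨mem_edgeMap'.2 hx.1, mem_edgeMap'.2 hx.2⟩⟩

end Invariance

/-- For `n ≥ 3`, `X(Kₙ □ K₂) ≅ K₁ ∨ (Kₙ □ K₂)` and
`X(K₁ ∨ (Kₙ □ K₂)) ≅ Kₙ □ K₂`; hence `Kₙ □ K₂` has period 2 under the mincut operator. -/
theorem stmt_15 (n : ℕ) (hn : 3 ≤ n) :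
    Nonempty (mincutGraph ((⊤ : SimpleGraph (Fin n)).boxProd (⊤ : SimpleGraph (Fin 2))) ≃g
      coneGraph ((⊤ : SimpleGraph (Fin n)).boxProd (⊤ : SimpleGraph (Fin 2)))) ∧
    Nonempty (mincutGraph (coneGraph ((⊤ : SimpleGraph (Fin n)).boxProd
        (⊤ : SimpleGraph (Fin 2)))) ≃g
      (⊤ : SimpleGraph (Fin n)).boxProd (⊤ : SimpleGraph (Fin 2))) ∧
    Nonempty (mincutGraph (mincutGraph ((⊤ : SimpleGraph (Fin n)).boxProd
        (⊤ : SimpleGraph (Fin 2)))) ≃g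
      (⊤ : SimpleGraph (Fin n)).boxProd (⊤ : SimpleGraph (Fin 2))) ∧
    ¬Nonempty (mincutGraph ((⊤ : SimpleGraph (Fin n)).boxProd (⊤ : SimpleGraph (Fin 2))) ≃g
      (⊤ : SimpleGraph (Fin n)).boxProd (⊤ : SimpleGraph (Fin 2))) := by
  have iso1 := prismIso1 hn
  have iso2 := coneIso2 hn
  refine ⟨⟨iso1.symm⟩, ⟨iso2.symm⟩, ⟨((mincutGraphIso iso1).symm).trans iso2.symm⟩, ?_⟩
  rintro ⟨f⟩
  have hcard : Fintype.card (Unit ⊕ (Fin n × Fin 2)) = Fintype.card (Fin n × Fin 2) :=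
    Fintype.card_congr ((iso1.toEquiv.trans f.toEquiv))
  simp [Fintype.card_sum, Fintype.card_prod] at hcard
end

section
/- Let G be a simple connected graph with a non-trivial mincut X_k = ⟨A,Ā⟩, and let v ∈ A be a vertex that is not a vertex of attachment of A. If v is trivial (deg(v) = λ(G)), then its trivial mincut X_v satisfies X_v ∩ X_k = ∅; consequently, if every mincut of G other than X_k is trivial and no trivial vertex lies in the attachment sets of X_k, then X(G) is disconnected. -/
open SimpleGraph

/-- If `v ∈ A` is a trivial vertex that is not a vertex of attachment of the
non-trivial mincut `X_k = ⟨A,Ā⟩`, then its trivial mincut is disjoint from `X_k`;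
consequently, if every other mincut is trivial and no trivial vertex is a vertex of
attachment of `X_k`, then `X(G)` is disconnected. -/
theorem stmt_19 {V : Type*} [Fintype V] [DecidableEq V] (G : SimpleGraph V) [DecidableRel G.Adj]
    (Xk : Finset (Sym2 V)) (A : Set V) (hk : MincutSides G Xk A)
    (hnt : ¬∃ w : V, (↑Xk : Set (Sym2 V)) = G.incidenceSet w)
    (v : V) (hvA : v ∈ A) (hvatt : ¬∃ e ∈ Xk, v ∈ e)
    (hvtriv : G.degree v = edgeConn G) :
    G.incidenceFinset v ∩ Xk = ∅ ∧
    ((∀ Y : Finset (Sym2 V), IsMincut G Y → Y ≠ Xk →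
        ∃ w : V, (↑Y : Set (Sym2 V)) = G.incidenceSet w) →
      (∀ w : V, G.degree w = edgeConn G → ¬∃ e ∈ Xk, w ∈ e) →
      ¬(mincutGraph G).Connected) := by
  have hcoe : ∀ u : V, (↑(G.incidenceFinset u) : Set (Sym2 V)) = G.incidenceSet u := by
    intro u; ext e; rw [Finset.mem_coe, SimpleGraph.mem_incidenceFinset]
  have hGconn : G.Connected := hk.1.1.1
  obtain ⟨w0, hw0⟩ := hk.2.2.1
  have hvw : v ≠ w0 := fun h => hw0 (h ▸ hvA)
  -- X_v is a mincut
  have hXv : IsMincut G (G.incidenceFinset v) := by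
    refine ⟨⟨hGconn, ?_, ?_⟩, ?_⟩
    · rw [hcoe v]
      exact G.incidenceSet_subset v
    · intro hc
      obtain ⟨p⟩ := hc.preconnected v w0
      cases p with
      | nil => exact hvw rfl
      | cons h q =>
        rw [SimpleGraph.deleteEdges_adj] at h
        apply h.2
        rw [hcoe v]
        exact ⟨G.mem_edgeSet.mpr h.1, Sym2.mem_mk_left _ _⟩
    · rw [G.card_incidenceFinset_eq_degree]
      exact hvtriv
  have hXvne : G.incidenceFinset v ≠ Xk := by
    intro h
    exact hnt ⟨v, by rw [← h, hcoe v]⟩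
  constructor
  · ext e
    simp only [Finset.mem_inter, Finset.notMem_empty, iff_false, not_and]
    intro he hek
    rw [SimpleGraph.mem_incidenceFinset] at he
    exact hvatt ⟨e, hek, he.2⟩
  · intro h1 h2 hcon
    -- Xk has no neighbor in the mincut graph
    have key : ∀ Z : {X : Finset (Sym2 V) // IsMincut G X},
        ¬ (mincutGraph G).Adj ⟨Xk, hk.1⟩ Z := by
      rintro ⟨Z, hZ⟩ hadj
      rw [mincutGraph, SimpleGraph.fromRel_adj] at hadj
      obtain ⟨hne, hint⟩ := hadj
      have hZne : Z ≠ Xk := by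
        intro h; exact hne (by simp [h])
      obtain ⟨w, hw⟩ := h1 Z hZ hZne
      have hZw : Z = G.incidenceFinset w := by
        apply Finset.coe_injective
        rw [hw, hcoe w]
      have hdegw : G.degree w = edgeConn G := by
        rw [← hZ.2, hZw, G.card_incidenceFinset_eq_degree]
      have hatt := h2 w hdegw
      have hint' : (Xk ∩ Z).Nonempty := by
        rcases hint with h | h
        · exact h
        · rwa [Finset.inter_comm] at h
      obtain ⟨e, he⟩ := hint'
      rw [Finset.mem_inter] at he
      have : e ∈ G.incidenceSet w := by
        rw [← hw]; exact_mod_cast he.2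
      exact hatt ⟨e, he.1, this.2⟩
    obtain ⟨p⟩ := hcon.preconnected ⟨Xk, hk.1⟩ ⟨G.incidenceFinset v, hXv⟩
    cases p with
    | nil => exact hXvne rfl
    | cons h q => exact key _ h
end
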